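/- arXiv:1701.03944 — 3 statements merged into one kernel-verified Lean document; each statement's English description precedes it below -/
import Mathlib

section
/- Let n ≥ 2 and let L be a non-returning regular language of state complexity n over a two-letter alphabet. Then the number of atoms of L is strictly less than 2^n; that is, at least one atomic intersection A_S, S ⊆ Q_n, is empty. -/
/-- Left quotient of a language by a word. -/
def leftQuot {α : Type} (L : Set (List α)) (w : List α) : Set (List α) := {x | w ++ x ∈ L}

/-- The set of left quotients of `L`. -/
def quotients {α : Type} (L : Set (List α)) : Set (Set (List α)) :=
  Set.range (leftQuot L)

/-- `L` is non-returning: no quotient by a nonempty word equals `L`. -/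
def NonReturning {α : Type} (L : Set (List α)) : Prop :=
  ∀ w : List α, w ≠ [] → leftQuot L w ≠ L

/-- The atomic intersection `A_S = ⋂_{i∈S} K_i ∩ ⋂_{i∉S} K_iᶜ` of a language whose
distinct left quotients are `K_0, …, K_{n-1}`. -/
def atomInt {α : Type} {n : ℕ} (K : Fin n → Set (List α)) (S : Set (Fin n)) :
    Set (List α) :=
  {w | ∀ i : Fin n, (i ∈ S → w ∈ K i) ∧ (i ∉ S → w ∉ K i)}

lemma leftQuot_leftQuot {α : Type} (L : Set (List α)) (w v : List α) :
    leftQuot (leftQuot L w) v = leftQuot L (w ++ v) := by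
  ext x; simp [leftQuot, List.append_assoc]

/-- A non-returning regular language of state complexity `n` over a two-letter alphabet
has fewer than `2^n` atoms: some atomic intersection is empty. Here `K` enumerates the
`n` distinct left quotients of `L`, with `K 0 = L` the quotient of the initial state. -/
theorem stmt7 {α : Type} (hα : Nat.card α = 2) (n : ℕ) (hn : 2 ≤ n)
    (L : Set (List α)) (hNR : NonReturning L)
    (K : Fin n → Set (List α)) (hKinj : Function.Injective K)
    (hKrange : Set.range K = quotients L) (hK0 : K ⟨0, by omega⟩ = L) :
    Nat.card {A : Set (List α) | ∃ S : Set (Fin n), A = atomInt K S ∧ A.Nonempty} < 2 ^ n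
    ∧ ∃ S : Set (Fin n), atomInt K S = ∅ := by
  have hfin : Finite α := Nat.finite_of_card_ne_zero (by omega)
  set z : Fin n := ⟨0, by omega⟩ with hz
  -- transition functions
  have hquot : ∀ (a : α) (i : Fin n), ∃ j : Fin n, j ≠ z ∧ K j = leftQuot (K i) [a] := by
    intro a i
    have hKi : K i ∈ quotients L := by rw [← hKrange]; exact Set.mem_range_self i
    obtain ⟨w, hw⟩ := hKi
    have heq : leftQuot (K i) [a] = leftQuot L (w ++ [a]) := by
      rw [← hw, leftQuot_leftQuot]
    have hmem : leftQuot L (w ++ [a]) ∈ quotients L := ⟨w ++ [a], rfl⟩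
    rw [← hKrange] at hmem
    obtain ⟨j, hj⟩ := hmem
    refine ⟨j, ?_, by rw [hj, heq]⟩
    intro hjz
    exact hNR (w ++ [a]) (by simp) (by rw [← hj, hjz, hK0])
  choose f hfz hf using hquot
  -- each f a is non-injective
  have hpair : ∀ a : α, ∃ i j : Fin n, i ≠ j ∧ f a i = f a j := by
    intro a
    by_contra h
    push_neg at h
    have hinj : Function.Injective (f a) := by
      intro i j hij
      by_contra hne
      exact h i j hne hij
    obtain ⟨i, hi⟩ := Finite.surjective_of_injective hinj z
    exact hfz a i hi
  obtain ⟨a, b, hab, hcover⟩ := Nat.card_eq_two_iff.mp hα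
  obtain ⟨i₁, j₁, hij1, hfab1⟩ := hpair a
  obtain ⟨i₂, j₂, hij2, hfab2⟩ := hpair b
  -- a separating set
  have hsep : ∃ S : Set (Fin n), (¬(i₁ ∈ S ↔ j₁ ∈ S)) ∧ (¬(i₂ ∈ S ↔ j₂ ∈ S)) := by
    by_cases h1 : i₁ = i₂ ∨ i₁ = j₂
    · refine ⟨{i₁}, by simp [hij1, Ne.symm hij1], ?_⟩
      rcases h1 with h | h <;> subst h <;> simp [hij2, Ne.symm hij2, hij2.symm]
    · by_cases h2 : j₁ = i₂ ∨ j₁ = j₂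
      · refine ⟨{j₁}, by simp [hij1, Ne.symm hij1], ?_⟩
        rcases h2 with h | h <;> subst h <;> simp [hij2, Ne.symm hij2, hij2.symm]
      · push_neg at h1 h2
        refine ⟨{i₁, i₂}, ?_, ?_⟩
        · simp [hij1, Ne.symm hij1, h2.1]
        · simp [hij2, Ne.symm hij2, h1.2, Ne.symm h1.2, (Ne.symm h1.2)]
  obtain ⟨S, hS1, hS2⟩ := hsep
  set T : Set (Fin n) := {i | ([] : List α) ∈ K i} with hT
  -- any separating set ≠ T has empty atomic intersection
  have hempty : ∀ S' : Set (Fin n), (¬(i₁ ∈ S' ↔ j₁ ∈ S')) → (¬(i₂ ∈ S' ↔ j₂ ∈ S')) →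
      S' ≠ T → atomInt K S' = ∅ := by
    intro S' h1 h2 hTne
    ext x
    simp only [Set.mem_empty_iff_false, iff_false]
    intro hx
    have hmemiff : ∀ i, x ∈ K i ↔ i ∈ S' := by
      intro i
      constructor
      · intro hxi
        by_contra hiS
        exact (hx i).2 hiS hxi
      · exact (hx i).1
    cases x with
    | nil =>
      apply hTne
      ext i
      rw [← hmemiff i, hT]
      simp
    | cons c y =>
      have hkey : ∀ i : Fin n, (c :: y) ∈ K i ↔ y ∈ K (f c i) := by
        intro i
        rw [hf c i]
        simp [leftQuot]
      have hc : c = a ∨ c = b := by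
        have : c ∈ ({a, b} : Set α) := by rw [hcover]; trivial
        simpa using this
      rcases hc with rfl | rfl
      · apply h1
        rw [← hmemiff i₁, ← hmemiff j₁, hkey i₁, hkey j₁, hfab1]
      · apply h2
        rw [← hmemiff i₂, ← hmemiff j₂, hkey i₂, hkey j₂, hfab2]
  -- pick S₀ ≠ T among S, Sᶜ
  have hScompl : ¬(i₁ ∈ Sᶜ ↔ j₁ ∈ Sᶜ) ∧ ¬(i₂ ∈ Sᶜ ↔ j₂ ∈ Sᶜ) := by
    constructor <;> simp only [Set.mem_compl_iff] <;> tauto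
  have hSne : S ≠ Sᶜ := by
    intro h
    by_cases hi : i₁ ∈ S
    · have : i₁ ∈ Sᶜ := h ▸ hi
      exact this hi
    · have : i₁ ∈ Sᶜ := hi
      rw [← h] at this
      exact hi this
  have hS0 : ∃ S₀ : Set (Fin n), atomInt K S₀ = ∅ := by
    by_cases hST : S = T
    · exact ⟨Sᶜ, hempty Sᶜ hScompl.1 hScompl.2 (by rw [← hST]; exact Ne.symm hSne)⟩
    · exact ⟨S, hempty S hS1 hS2 hST⟩
  obtain ⟨S₀, hS₀⟩ := hS0
  refine ⟨?_, S₀, hS₀⟩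
  -- counting
  have himg : {A : Set (List α) | ∃ S : Set (Fin n), A = atomInt K S ∧ A.Nonempty}
      = atomInt K '' {S : Set (Fin n) | (atomInt K S).Nonempty} := by
    ext A
    constructor
    · rintro ⟨S, rfl, hne⟩
      exact ⟨S, hne, rfl⟩
    · rintro ⟨S, hne, rfl⟩
      exact ⟨S, rfl, hne⟩
  rw [Nat.card_coe_set_eq, himg]
  calc (atomInt K '' {S : Set (Fin n) | (atomInt K S).Nonempty}).ncard
      ≤ {S : Set (Fin n) | (atomInt K S).Nonempty}.ncard := Set.ncard_image_le (Set.toFinite _)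
    _ < (Set.univ : Set (Set (Fin n))).ncard := by
        apply Set.ncard_lt_ncard
        · constructor
          · exact Set.subset_univ _
          · intro hsub
            have : (atomInt K S₀).Nonempty := hsub (Set.mem_univ S₀)
            rw [hS₀] at this
            exact Set.not_nonempty_empty this
        · exact Set.finite_univ
    _ = 2 ^ n := by
        rw [Set.ncard_univ, Nat.card_eq_fintype_card, Fintype.card_set, Fintype.card_fin]
end

section
/- Let L be a non-returning regular language of state complexity n, with left quotients K_0,…,K_{n-1} indexed by the states Q_n of its minimal DFA. Then for every S ⊆ Q_n the state complexity of the atomic intersection A_S satisfies: κ(A_S) ≤ 2^{n-1} if S = ∅ or S = Q_n, and κ(A_S) ≤ 2 + Σ_{x=1}^{|S|} Σ_{y=1}^{n-|S|} C(n-1,x)·C(n-1-x,y) if ∅ ⊊ S ⊊ Q_n (where C(·,·) denotes binomial coefficients). -/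
/-- The state complexity of `L`: the number of distinct left quotients of `L`. -/
noncomputable def stateComplexity {α : Type} (L : Set (List α)) : ℕ :=
  Nat.card (quotients L)

/-- Upper bounds on the state complexity of the atomic intersections of a non-returning
language `L` of state complexity `n` (`K` enumerates the distinct left quotients, `K 0 = L`):
`κ(A_S) ≤ 2^{n-1}` for `S = ∅` or `S = Q_n`, and
`κ(A_S) ≤ 2 + Σ_{x=1}^{|S|} Σ_{y=1}^{n-|S|} C(n-1,x) C(n-1-x,y)` otherwise. -/
theorem stmt9 {α : Type} (n : ℕ) (hn : 1 ≤ n)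
    (L : Set (List α)) (hNR : NonReturning L)
    (K : Fin n → Set (List α)) (hKinj : Function.Injective K)
    (hKrange : Set.range K = quotients L) (hK0 : K ⟨0, by omega⟩ = L)
    (S : Set (Fin n)) :
    ((S = ∅ ∨ S = Set.univ) → stateComplexity (atomInt K S) ≤ 2 ^ (n - 1)) ∧
    (S ≠ ∅ ∧ S ≠ Set.univ →
      stateComplexity (atomInt K S) ≤
        2 + ∑ x ∈ Finset.Icc 1 S.ncard, ∑ y ∈ Finset.Icc 1 (n - S.ncard),
          (n - 1).choose x * (n - 1 - x).choose y) := by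

  classical
  set z : Fin n := ⟨0, by omega⟩ with hzdef
  -- key: quotients of quotients by nonempty words avoid state 0
  have key : ∀ (i : Fin n) (w : List α), w ≠ [] →
      ∃ j : Fin n, leftQuot (K i) w = K j ∧ j ≠ z := by
    intro i w hw
    have hKi : K i ∈ quotients L := by rw [← hKrange]; exact ⟨i, rfl⟩
    obtain ⟨u, hu⟩ := hKi
    have h1 : leftQuot (K i) w = leftQuot L (u ++ w) := by
      rw [← hu]; ext x; simp [leftQuot, List.append_assoc]
    have h2 : leftQuot L (u ++ w) ∈ quotients L := ⟨u ++ w, rfl⟩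
    rw [← hKrange] at h2
    obtain ⟨j, hj⟩ := h2
    refine ⟨j, by rw [h1, hj], ?_⟩
    intro hj0
    exact hNR (u ++ w) (by simp [hw]) (by rw [hj0] at hj; rw [← hj, hK0])
  -- the transition function on states induced by a nonempty word
  let g : List α → Fin n → Fin n := fun w i =>
    if h : w ≠ [] then (key i w h).choose else i
  have hg : ∀ (w : List α), w ≠ [] → ∀ i,
      leftQuot (K i) w = K (g w i) ∧ g w i ≠ z := by
    intro w hw i
    simp only [g, dif_pos hw]
    exact (key i w hw).choose_spec
  -- the "pair" languages
  let F : Finset (Fin n) × Finset (Fin n) → Set (List α) := fun p =>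
    {x | (∀ j ∈ p.1, x ∈ K j) ∧ (∀ j ∈ p.2, x ∉ K j)}
  have hmem : ∀ (w : List α), w ≠ [] → ∀ i (x : List α),
      w ++ x ∈ K i ↔ x ∈ K (g w i) := by
    intro w hw i x
    rw [← (hg w hw i).1]; exact Iff.rfl
  -- the quotient formula
  have hform : ∀ (U : Set (Fin n)) (w : List α), w ≠ [] →
      leftQuot (atomInt K U) w =
        F (U.toFinset.image (g w), Uᶜ.toFinset.image (g w)) := by
    intro U w hw
    ext x
    simp only [leftQuot, atomInt, Set.mem_setOf_eq, F]
    constructor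
    · intro h
      constructor
      · intro j hj
        rw [Finset.mem_image] at hj
        obtain ⟨i, hi, rfl⟩ := hj
        exact (hmem w hw i x).1 ((h i).1 (Set.mem_toFinset.mp hi))
      · intro j hj
        rw [Finset.mem_image] at hj
        obtain ⟨i, hi, rfl⟩ := hj
        intro hx
        exact (h i).2 (Set.mem_toFinset.mp hi) ((hmem w hw i x).2 hx)
    · rintro ⟨h1, h2⟩ i
      constructor
      · intro hiU
        exact (hmem w hw i x).2
          (h1 _ (Finset.mem_image_of_mem _ (Set.mem_toFinset.mpr hiU)))
      · intro hiU hx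
        exact h2 _ (Finset.mem_image_of_mem _ (Set.mem_toFinset.mpr hiU))
          ((hmem w hw i x).1 hx)
  -- quotient by empty word
  have hnil : ∀ (M : Set (List α)), leftQuot M [] = M := by
    intro M; ext x; simp [leftQuot]
  -- the ground set: all states but 0
  set T : Finset (Fin n) := Finset.univ.erase z with hTdef
  have hzT : ∀ (w : List α), w ≠ [] → ∀ (U : Finset (Fin n)),
      U.image (g w) ⊆ T := by
    intro w hw U
    rw [Finset.image_subset_iff]
    intro i _
    exact Finset.mem_erase.mpr ⟨(hg w hw i).2, Finset.mem_univ _⟩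
  have hTcard : T.card = n - 1 := by
    rw [hTdef, Finset.card_erase_of_mem (Finset.mem_univ z)]
    simp
  have hcard : Nat.card (Fin n) = n := by simp
  have hSc : S.ncard + Sᶜ.ncard = n := by
    have := Set.ncard_add_ncard_compl S
    omega
  have hstate : ∀ (M : Set (List α)), stateComplexity M = (quotients M).ncard := by
    intro M
    rw [stateComplexity, Nat.card_coe_set_eq]
  constructor
  · -- trivial cases
    rintro (rfl | rfl)
    · -- S = ∅
      set A : Set (List α) := atomInt K (∅ : Set (Fin n)) with hA
      set E : Finset (Finset (Fin n) × Finset (Fin n)) :=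
        (T.powerset.erase ∅).image (fun Y => ((∅ : Finset (Fin n)), Y)) with hE
      have hsub : quotients A ⊆ insert A (F '' ↑E) := by
        rintro q ⟨w, rfl⟩
        rcases eq_or_ne w [] with rfl | hw
        · rw [hnil]; exact Set.mem_insert _ _
        · right
          rw [hform ∅ w hw]
          simp only [Set.toFinset_empty, Set.compl_empty, Set.toFinset_univ,
            Finset.image_empty]
          refine ⟨((∅ : Finset (Fin n)), Finset.univ.image (g w)), ?_, rfl⟩
          simp only [hE, Finset.coe_image, Set.mem_image, Finset.mem_coe]
          refine ⟨Finset.univ.image (g w), ?_, rfl⟩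
          refine Finset.mem_erase.mpr ⟨?_, Finset.mem_powerset.mpr (hzT w hw _)⟩
          have huniv : (Finset.univ : Finset (Fin n)).Nonempty := ⟨z, Finset.mem_univ z⟩
          exact Finset.Nonempty.ne_empty (huniv.image _)
      have hEcard : E.card ≤ 2 ^ (n - 1) - 1 := by
        refine Finset.card_image_le.trans ?_
        rw [Finset.card_erase_of_mem (Finset.mem_powerset.mpr (Finset.empty_subset _)),
          Finset.card_powerset, hTcard]
      have h2p : 1 ≤ 2 ^ (n - 1) := Nat.one_le_two_pow
      rw [hstate]
      calc (quotients A).ncard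
          ≤ (insert A (F '' ↑E)).ncard := by
            refine Set.ncard_le_ncard hsub ?_
            exact (E.finite_toSet.image F).insert A
        _ ≤ (F '' ↑E).ncard + 1 := Set.ncard_insert_le _ _
        _ ≤ E.card + 1 := by
            have h1 := Set.ncard_image_le (s := (↑E : Set _)) (f := F)
              E.finite_toSet
            rw [Set.ncard_coe_finset] at h1
            omega
        _ ≤ 2 ^ (n - 1) := by omega
    · -- S = univ
      set A : Set (List α) := atomInt K (Set.univ : Set (Fin n)) with hA
      set E : Finset (Finset (Fin n) × Finset (Fin n)) :=
        (T.powerset.erase ∅).image (fun X => (X, (∅ : Finset (Fin n)))) with hE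
      have hsub : quotients A ⊆ insert A (F '' ↑E) := by
        rintro q ⟨w, rfl⟩
        rcases eq_or_ne w [] with rfl | hw
        · rw [hnil]; exact Set.mem_insert _ _
        · right
          rw [hform Set.univ w hw]
          simp only [Set.compl_univ, Set.toFinset_empty, Set.toFinset_univ,
            Finset.image_empty]
          refine ⟨(Finset.univ.image (g w), (∅ : Finset (Fin n))), ?_, rfl⟩
          simp only [hE, Finset.coe_image, Set.mem_image, Finset.mem_coe]
          refine ⟨Finset.univ.image (g w), ?_, rfl⟩
          refine Finset.mem_erase.mpr ⟨?_, Finset.mem_powerset.mpr (hzT w hw _)⟩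
          have huniv : (Finset.univ : Finset (Fin n)).Nonempty := ⟨z, Finset.mem_univ z⟩
          exact Finset.Nonempty.ne_empty (huniv.image _)
      have hEcard : E.card ≤ 2 ^ (n - 1) - 1 := by
        refine Finset.card_image_le.trans ?_
        rw [Finset.card_erase_of_mem (Finset.mem_powerset.mpr (Finset.empty_subset _)),
          Finset.card_powerset, hTcard]
      have h2p : 1 ≤ 2 ^ (n - 1) := Nat.one_le_two_pow
      rw [hstate]
      calc (quotients A).ncard
          ≤ (insert A (F '' ↑E)).ncard := by
            refine Set.ncard_le_ncard hsub ?_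
            exact (E.finite_toSet.image F).insert A
        _ ≤ (F '' ↑E).ncard + 1 := Set.ncard_insert_le _ _
        _ ≤ E.card + 1 := by
            have h1 := Set.ncard_image_le (s := (↑E : Set _)) (f := F)
              E.finite_toSet
            rw [Set.ncard_coe_finset] at h1
            omega
        _ ≤ 2 ^ (n - 1) := by omega
  · -- nontrivial case
    rintro ⟨hS1, hS2⟩
    set s : ℕ := S.ncard with hsdef
    set A : Set (List α) := atomInt K S with hA
    set D : Finset (Finset (Fin n) × Finset (Fin n)) :=
      (T.powerset ×ˢ T.powerset).filter
        (fun p => p.1.Nonempty ∧ p.2.Nonempty ∧ Disjoint p.1 p.2 ∧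
          p.1.card ≤ s ∧ p.2.card ≤ n - s) with hD
    have hStf : S.toFinset.card = s := (Set.ncard_eq_toFinset_card' S).symm
    have hSctf : Sᶜ.toFinset.card = n - s := by
      have := (Set.ncard_eq_toFinset_card' Sᶜ).symm
      omega
    -- subset claim
    have hsub : quotients A ⊆ insert A (insert ∅ (F '' ↑D)) := by
      rintro q ⟨w, rfl⟩
      rcases eq_or_ne w [] with rfl | hw
      · rw [hnil]; exact Set.mem_insert _ _
      · right
        rw [hform S w hw]
        set X : Finset (Fin n) := S.toFinset.image (g w) with hX
        set Y : Finset (Fin n) := Sᶜ.toFinset.image (g w) with hY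
        by_cases hdisj : Disjoint X Y
        · right
          refine ⟨(X, Y), ?_, rfl⟩
          rw [Finset.mem_coe, hD, Finset.mem_filter]
          refine ⟨Finset.mem_product.mpr ⟨Finset.mem_powerset.mpr (hzT w hw _),
            Finset.mem_powerset.mpr (hzT w hw _)⟩, ?_, ?_, hdisj, ?_, ?_⟩
          · refine Finset.Nonempty.image ?_ _
            rw [Set.toFinset_nonempty, Set.nonempty_iff_ne_empty]
            exact hS1
          · refine Finset.Nonempty.image ?_ _
            rw [Set.toFinset_nonempty, Set.nonempty_iff_ne_empty]
            intro h
            exact hS2 (Set.compl_empty_iff.mp h)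
          · calc X.card ≤ S.toFinset.card := Finset.card_image_le
              _ = s := hStf
          · calc Y.card ≤ Sᶜ.toFinset.card := Finset.card_image_le
              _ = n - s := hSctf
        · left
          rw [Finset.not_disjoint_iff] at hdisj
          obtain ⟨j, hj1, hj2⟩ := hdisj
          ext x
          simp only [F, Set.mem_setOf_eq, Set.mem_empty_iff_false, iff_false]
          rintro ⟨h1, h2⟩
          exact h2 j hj2 (h1 j hj1)
    -- counting claim
    have hDcard : D.card ≤
        ∑ x ∈ Finset.Icc 1 s, ∑ y ∈ Finset.Icc 1 (n - s),
          (n - 1).choose x * (n - 1 - x).choose y := by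
      set P : ℕ → ℕ → Finset (Finset (Fin n) × Finset (Fin n)) := fun x y =>
        (T.powersetCard x).biUnion
          (fun X => ((T \ X).powersetCard y).image (fun Y => (X, Y))) with hP
      have hPcard : ∀ x y, (P x y).card ≤ (n - 1).choose x * (n - 1 - x).choose y := by
        intro x y
        refine Finset.card_biUnion_le.trans ?_
        have hterm : ∀ X ∈ T.powersetCard x,
            (((T \ X).powersetCard y).image (fun Y => (X, Y))).card
              ≤ (n - 1 - x).choose y := by
          intro X hX
          refine Finset.card_image_le.trans ?_
          rw [Finset.card_powersetCard]
          obtain ⟨hX1, hX2⟩ := Finset.mem_powersetCard.mp hX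
          rw [Finset.card_sdiff_of_subset hX1, hTcard, hX2]
        calc ∑ X ∈ T.powersetCard x,
              (((T \ X).powersetCard y).image (fun Y => (X, Y))).card
            ≤ ∑ _X ∈ T.powersetCard x, (n - 1 - x).choose y :=
              Finset.sum_le_sum hterm
          _ = (T.powersetCard x).card * (n - 1 - x).choose y := by
              rw [Finset.sum_const, smul_eq_mul]
          _ = (n - 1).choose x * (n - 1 - x).choose y := by
              rw [Finset.card_powersetCard, hTcard]
      have hsub2 : D ⊆ (Finset.Icc 1 s ×ˢ Finset.Icc 1 (n - s)).biUnion
          (fun q => P q.1 q.2) := by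
        intro p hp
        rw [hD, Finset.mem_filter, Finset.mem_product] at hp
        obtain ⟨⟨hp1, hp2⟩, hne1, hne2, hdisj, hc1, hc2⟩ := hp
        rw [Finset.mem_biUnion]
        refine ⟨(p.1.card, p.2.card), ?_, ?_⟩
        · rw [Finset.mem_product]
          exact ⟨Finset.mem_Icc.mpr ⟨Finset.card_pos.mpr hne1, hc1⟩,
            Finset.mem_Icc.mpr ⟨Finset.card_pos.mpr hne2, hc2⟩⟩
        · rw [hP, Finset.mem_biUnion]
          refine ⟨p.1, Finset.mem_powersetCard.mpr ⟨Finset.mem_powerset.mp hp1, rfl⟩, ?_⟩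
          rw [Finset.mem_image]
          refine ⟨p.2, Finset.mem_powersetCard.mpr ⟨?_, rfl⟩, rfl⟩
          intro a ha
          rw [Finset.mem_sdiff]
          exact ⟨Finset.mem_powerset.mp hp2 ha,
            fun h => (Finset.disjoint_left.mp hdisj h) ha⟩
      calc D.card ≤ ((Finset.Icc 1 s ×ˢ Finset.Icc 1 (n - s)).biUnion
            (fun q => P q.1 q.2)).card := Finset.card_le_card hsub2
        _ ≤ ∑ q ∈ Finset.Icc 1 s ×ˢ Finset.Icc 1 (n - s), (P q.1 q.2).card :=
            Finset.card_biUnion_le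
        _ ≤ ∑ q ∈ Finset.Icc 1 s ×ˢ Finset.Icc 1 (n - s),
            (n - 1).choose q.1 * (n - 1 - q.1).choose q.2 :=
            Finset.sum_le_sum (fun q _ => hPcard q.1 q.2)
        _ = ∑ x ∈ Finset.Icc 1 s, ∑ y ∈ Finset.Icc 1 (n - s),
            (n - 1).choose x * (n - 1 - x).choose y := Finset.sum_product _ _ _
    rw [hstate]
    calc (quotients A).ncard
        ≤ (insert A (insert ∅ (F '' ↑D))).ncard := by
          refine Set.ncard_le_ncard hsub ?_
          exact (((D.finite_toSet.image F).insert ∅).insert A)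
      _ ≤ (insert ∅ (F '' ↑D)).ncard + 1 := Set.ncard_insert_le _ _
      _ ≤ (F '' ↑D).ncard + 2 := by
          have := Set.ncard_insert_le (∅ : Set (List α)) (F '' ↑D)
          omega
      _ ≤ D.card + 2 := by
          have h1 := Set.ncard_image_le (s := (↑D : Set _)) (f := F) D.finite_toSet
          rw [Set.ncard_coe_finset] at h1
          omega
      _ ≤ 2 + ∑ x ∈ Finset.Icc 1 s, ∑ y ∈ Finset.Icc 1 (n - s),
            (n - 1).choose x * (n - 1 - x).choose y := by omega
end

section
/- Let n ≥ 4. For every S ⊆ Q_n, the atomic intersection A_S of L_n(Σ_n) is an atom, and its state complexity meets the following bounds with equality: κ(A_S) = 2^{n-1} if S = ∅ or S = Q_n, and κ(A_S) = 2 + Σ_{x=1}^{|S|} Σ_{y=1}^{n-|S|} C(n-1,x)·C(n-1-x,y) if ∅ ⊊ S ⊊ Q_n (where C(·,·) denotes binomial coefficients). -/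
/-- The rank of a transformation of `Fin n`: the cardinality of its image. -/
def rank {n : ℕ} (t : Fin n → Fin n) : ℕ := (Finset.univ.image t).card

namespace Atom10

variable {n : ℕ}

abbrev Sig (n : ℕ) : Type := {p : Fin n × Fin n // p.1 < p.2}

def TT (δ : Sig n → Fin n → Fin n) (w : List (Sig n)) (q : Fin n) : Fin n :=
  w.foldl (fun q x => δ x q) q

@[simp] lemma TT_nil (δ : Sig n → Fin n → Fin n) (q : Fin n) : TT δ [] q = q := rfl

lemma TT_cons (δ : Sig n → Fin n → Fin n) (x : Sig n) (w : List (Sig n)) (q : Fin n) :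
    TT δ (x :: w) q = TT δ w (δ x q) := rfl

lemma TT_append (δ : Sig n → Fin n → Fin n) (w w' : List (Sig n)) (q : Fin n) :
    TT δ (w ++ w') q = TT δ w' (TT δ w q) :=
  List.foldl_append ..

lemma TT_singleton (δ : Sig n → Fin n → Fin n) (x : Sig n) (q : Fin n) :
    TT δ [x] q = δ x q := rfl

lemma TT_ne0 {δ : Sig n → Fin n → Fin n} (hav : ∀ x q, (δ x q).val ≠ 0) :
    ∀ (w : List (Sig n)) (x : Sig n) (q : Fin n), (TT δ (x :: w) q).val ≠ 0 := by
  intro w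
  induction w with
  | nil => intro x q; exact hav x q
  | cons y w ih => intro x q; exact ih y (δ x q)

def RealC (δ : Sig n → Fin n → Fin n) (g : Fin n → Fin n) : Prop :=
  ∃ w : List (Sig n), ∀ q : Fin n, q.val ≠ 0 → TT δ w q = g q

lemma RealC.congr {δ : Sig n → Fin n → Fin n} {g g' : Fin n → Fin n} (h : RealC δ g)
    (h' : ∀ q : Fin n, q.val ≠ 0 → g q = g' q) : RealC δ g' :=
  ⟨h.choose, fun q hq => (h.choose_spec q hq).trans (h' q hq)⟩

lemma RealC.comp {δ : Sig n → Fin n → Fin n} {g h : Fin n → Fin n} (hg : RealC δ g)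
    (hh : RealC δ h) (hg0 : ∀ q : Fin n, q.val ≠ 0 → (g q).val ≠ 0) :
    RealC δ (fun q => h (g q)) := by
  obtain ⟨wg, hwg⟩ := hg; obtain ⟨wh, hwh⟩ := hh
  exact ⟨wg ++ wh, fun q hq => by rw [TT_append, hwg q hq, hwh _ (hg0 q hq)]⟩

def embedC (i : Fin (n - 1)) : Fin n := ⟨i.val + 1, by have := i.isLt; omega⟩

@[simp] lemma embedC_val (i : Fin (n - 1)) : (embedC (n := n) i).val = i.val + 1 := rfl

lemma embedC_ne0 (i : Fin (n - 1)) : (embedC (n := n) i).val ≠ 0 := by simp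

def predC (q : Fin n) (h : q.val ≠ 0) : Fin (n - 1) := ⟨q.val - 1, by have := q.isLt; omega⟩

@[simp] lemma embedC_predC {q : Fin n} (h : q.val ≠ 0) : embedC (predC q h) = q := by
  apply Fin.ext; simp [predC]; omega

@[simp] lemma predC_embedC (i : Fin (n - 1)) (h : (embedC (n := n) i).val ≠ 0) :
    predC (embedC i) h = i := by
  apply Fin.ext; simp [predC]

def liftP (π : Equiv.Perm (Fin (n - 1))) (q : Fin n) : Fin n :=
  if h : q.val = 0 then q else embedC (π (predC q h))

lemma liftP_apply (π : Equiv.Perm (Fin (n - 1))) {q : Fin n} (h : q.val ≠ 0) :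
    liftP π q = embedC (π (predC q h)) := dif_neg h

lemma liftP_embedC (π : Equiv.Perm (Fin (n - 1))) (i : Fin (n - 1)) :
    liftP (n := n) π (embedC i) = embedC (π i) := by
  rw [liftP_apply π (embedC_ne0 i), predC_embedC]

lemma liftP_ne0 (π : Equiv.Perm (Fin (n - 1))) {q : Fin n} (h : q.val ≠ 0) :
    (liftP π q).val ≠ 0 := by rw [liftP_apply π h]; exact embedC_ne0 _

lemma liftP_injOn (π : Equiv.Perm (Fin (n - 1))) {q q' : Fin n} (h : q.val ≠ 0)
    (h' : q'.val ≠ 0) (heq : liftP π q = liftP π q') : q = q' := by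
  rw [liftP_apply π h, liftP_apply π h'] at heq
  have h1 : π (predC q h) = π (predC q' h') := by
    apply Fin.ext
    have := congrArg Fin.val heq
    simpa using this
  have h2 : predC q h = predC q' h' := π.injective h1
  have := congrArg Fin.val h2
  apply Fin.ext
  simp [predC] at this
  omega

lemma liftP_one {q : Fin n} (h : q.val ≠ 0) : liftP 1 q = q := by
  rw [liftP_apply 1 h]; simp

lemma liftP_mul (π τ : Equiv.Perm (Fin (n - 1))) {q : Fin n} (h : q.val ≠ 0) :
    liftP (π * τ) q = liftP π (liftP τ q) := by
  rw [liftP_apply _ h, liftP_apply τ h, liftP_embedC, Equiv.Perm.mul_apply]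


lemma embedC_injective : Function.Injective (embedC (n := n)) := by
  intro i j h
  have := congrArg Fin.val h
  simp at this
  exact Fin.ext this

section Letters

variable (hn : 4 ≤ n)

def aLet : Sig n := ⟨(⟨0, by have := hn; omega⟩, ⟨n - 1, by omega⟩), by rw [Fin.lt_def]; simp; omega⟩

def bLet : Sig n := ⟨(⟨0, by have := hn; omega⟩, ⟨1, by omega⟩), by rw [Fin.lt_def]; simp⟩

def cLet : Sig n := ⟨(⟨1, by omega⟩, ⟨n - 1, by omega⟩), by rw [Fin.lt_def]; simp; omega⟩

end Letters

variable {δ : Sig n → Fin n → Fin n}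

lemma realC_finRotate' (k : ℕ) {δ : Sig (k + 4) → Fin (k + 4) → Fin (k + 4)}
    (ha : ∀ x : Sig (k + 4), x.val.1.val = 0 → x.val.2.val = k + 4 - 1 →
      ∀ q, (δ x q).val = if q.val = k + 4 - 1 then 1 else q.val + 1) :
    RealC δ (liftP (n := k + 4) (finRotate (k + 3))) := by
  have hn : 4 ≤ k + 4 := by omega
  refine ⟨[aLet hn], fun q hq => ?_⟩
  rw [TT_singleton, liftP_apply _ hq]
  apply Fin.ext
  rw [ha (aLet hn) rfl rfl q, embedC_val]
  have hqlt := q.isLt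
  show (if (q.val : ℕ) = k + 4 - 1 then 1 else q.val + 1) =
    ((finRotate (k + 3)) (⟨q.val - 1, by omega⟩ : Fin (k + 3))).val + 1
  set x : Fin (k + 3) := ⟨q.val - 1, by omega⟩ with hxdef
  have h1 : (finRotate (k + 3)) x = x + 1 := finRotate_succ_apply x
  have h3 : (x + 1).val = if x = Fin.last (k + 2) then 0 else x.val + 1 := Fin.val_add_one x
  rw [h1, h3]
  have hxval : x.val = q.val - 1 := rfl
  have hlast : (Fin.last (k + 2)).val = k + 2 := rfl
  by_cases hx : x = Fin.last (k + 2)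
  · have hxx := congrArg Fin.val hx
    rw [hlast, hxval] at hxx
    rw [if_pos hx]
    split_ifs <;> omega
  · have hxv : x.val ≠ k + 2 := by
      intro hcon
      exact hx (Fin.ext (by rw [hcon, hlast]))
    rw [if_neg hx]
    rw [hxval] at hxv
    split_ifs <;> omega

lemma realC_swap01' (k : ℕ) {δ : Sig (k + 4) → Fin (k + 4) → Fin (k + 4)}
    (hb : ∀ x : Sig (k + 4), x.val.1.val = 0 → x.val.2.val = 1 →
      ∀ q, (δ x q).val =
        if q.val = 0 then 2 else if q.val = 1 then 2 else if q.val = 2 then 1 else q.val) :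
    RealC δ (liftP (n := k + 4)
      (Equiv.swap (⟨0, by omega⟩ : Fin (k + 3)) ⟨1, by omega⟩)) := by
  have hn : 4 ≤ k + 4 := by omega
  set x0 : Fin (k + 3) := ⟨0, by omega⟩ with hx0
  set x1 : Fin (k + 3) := ⟨1, by omega⟩ with hx1
  have hv0 : x0.val = 0 := rfl
  have hv1 : x1.val = 1 := rfl
  refine ⟨[bLet hn], fun q hq => ?_⟩
  rw [TT_singleton, liftP_apply _ hq]
  apply Fin.ext
  rw [hb (bLet hn) rfl rfl q, embedC_val]
  have hqlt := q.isLt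
  show (if (q.val : ℕ) = 0 then 2 else if q.val = 1 then 2 else if q.val = 2 then 1 else q.val) =
    ((Equiv.swap x0 x1) (⟨q.val - 1, by omega⟩ : Fin (k + 3))).val + 1
  set x : Fin (k + 3) := ⟨q.val - 1, by omega⟩ with hxdef
  have hxval : x.val = q.val - 1 := rfl
  by_cases h1 : q.val = 1
  · have hx : x = x0 := Fin.ext (by rw [hxval, h1, hv0])
    rw [hx, Equiv.swap_apply_left]
    split_ifs <;> omega
  · by_cases h2 : q.val = 2
    · have hx : x = x1 := Fin.ext (by rw [hxval, h2, hv1])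
      rw [hx, Equiv.swap_apply_right]
      split_ifs <;> omega
    · have hne1 : x ≠ x0 := by
        intro h; have := congrArg Fin.val h; rw [hxval, hv0] at this; omega
      have hne2 : x ≠ x1 := by
        intro h; have := congrArg Fin.val h; rw [hxval, hv1] at this; omega
      rw [Equiv.swap_apply_of_ne_of_ne hne1 hne2]
      rw [hxval]
      split_ifs <;> omega

lemma RealC.liftP_pow {π : Equiv.Perm (Fin (n - 1))} (h : RealC δ (liftP π)) :
    ∀ m : ℕ, RealC δ (liftP (π ^ m))
  | 0 => ⟨[], fun q hq => by rw [TT_nil, pow_zero, liftP_one hq]⟩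
  | (m + 1) => by
    have hm := h.liftP_pow m
    have hcomp := RealC.comp h hm (fun q hq => liftP_ne0 _ hq)
    refine hcomp.congr (fun q hq => ?_)
    rw [pow_succ, liftP_mul _ _ hq]

lemma RealC.liftP_inv {π : Equiv.Perm (Fin (n - 1))} (h : RealC δ (liftP π)) :
    RealC δ (liftP π⁻¹) := by
  have ho : 0 < orderOf π := orderOf_pos π
  have h1 : π * π ^ (orderOf π - 1) = 1 := by
    rw [← pow_succ', Nat.sub_add_cancel ho, pow_orderOf_eq_one]
  rw [inv_eq_of_mul_eq_one_right h1]
  exact h.liftP_pow _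

lemma realC_liftP_all' (k : ℕ) {δ : Sig (k + 4) → Fin (k + 4) → Fin (k + 4)}
    (ha : ∀ x : Sig (k + 4), x.val.1.val = 0 → x.val.2.val = k + 4 - 1 →
      ∀ q, (δ x q).val = if q.val = k + 4 - 1 then 1 else q.val + 1)
    (hb : ∀ x : Sig (k + 4), x.val.1.val = 0 → x.val.2.val = 1 →
      ∀ q, (δ x q).val =
        if q.val = 0 then 2 else if q.val = 1 then 2 else if q.val = 2 then 1 else q.val)
    (π : Equiv.Perm (Fin (k + 3))) : RealC δ (liftP (n := k + 4) π) := by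
  have hrotC : RealC δ (liftP (n := k + 4) (finRotate (k + 3))) := realC_finRotate' k ha
  set x0 : Fin (k + 3) := ⟨0, by omega⟩ with hx0
  set x1 : Fin (k + 3) := ⟨1, by omega⟩ with hx1
  have hswapC : RealC δ (liftP (n := k + 4) (Equiv.swap x0 x1)) := realC_swap01' k hb
  have hαx0 : finRotate (k + 3) x0 = x1 := by
    have h1 : (finRotate (k + 3)) x0 = x0 + 1 := finRotate_succ_apply x0
    have h3 : (x0 + 1).val = if x0 = Fin.last (k + 2) then 0 else x0.val + 1 := Fin.val_add_one x0
    apply Fin.ext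
    have hne : ¬x0 = Fin.last (k + 2) := by
      intro h
      have := congrArg Fin.val h
      have hl : (Fin.last (k + 2)).val = k + 2 := rfl
      have h0 : x0.val = 0 := rfl
      rw [hl, h0] at this
      omega
    rw [h1, h3, if_neg hne]
  have honeC : RealC δ (liftP (n := k + 4) (1 : Equiv.Perm (Fin (k + 3)))) :=
    ⟨[], fun q hq => by rw [TT_nil, liftP_one hq]⟩
  let H : Subgroup (Equiv.Perm (Fin (k + 3))) :=
    { carrier := {τ | RealC δ (liftP (n := k + 4) τ) ∧ RealC δ (liftP (n := k + 4) τ⁻¹)}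
      one_mem' := ⟨honeC, by rw [inv_one]; exact honeC⟩
      mul_mem' := by
        rintro a b ⟨ha1, ha2⟩ ⟨hb1, hb2⟩
        constructor
        · exact (RealC.comp hb1 ha1 (fun q hq => liftP_ne0 _ hq)).congr
            (fun q hq => (liftP_mul a b hq).symm)
        · have h2 : RealC δ (liftP (n := k + 4) (b⁻¹ * a⁻¹)) :=
            (RealC.comp ha2 hb2 (fun q hq => liftP_ne0 _ hq)).congr
              (fun q hq => (liftP_mul b⁻¹ a⁻¹ hq).symm)
          rw [mul_inv_rev]
          exact h2
      inv_mem' := by rintro a ⟨ha1, ha2⟩; exact ⟨ha2, by rw [inv_inv]; exact ha1⟩ }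
  have hcl : Subgroup.closure {finRotate (k + 3), Equiv.swap x0 (finRotate (k + 3) x0)} ≤ H := by
    rw [Subgroup.closure_le]
    rintro τ (rfl | h)
    · exact ⟨hrotC, hrotC.liftP_inv⟩
    · simp only [Set.mem_singleton_iff] at h
      subst h
      rw [hαx0]
      refine ⟨hswapC, ?_⟩
      rw [Equiv.swap_inv]
      exact hswapC
  have htop : Subgroup.closure {finRotate (k + 3), Equiv.swap x0 (finRotate (k + 3) x0)} = ⊤ :=
    Equiv.Perm.closure_cycle_adjacent_swap (isCycle_finRotate (n := k + 1))
      (support_finRotate (n := k + 1)) x0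
  have hπ : π ∈ H := by
    rw [htop] at hcl
    exact hcl (Subgroup.mem_top π)
  exact hπ.1

lemma realC_liftP_all (hn : 4 ≤ n)
    (ha : ∀ x : Sig n, x.val.1.val = 0 → x.val.2.val = n - 1 →
      ∀ q, (δ x q).val = if q.val = n - 1 then 1 else q.val + 1)
    (hb : ∀ x : Sig n, x.val.1.val = 0 → x.val.2.val = 1 →
      ∀ q, (δ x q).val =
        if q.val = 0 then 2 else if q.val = 1 then 2 else if q.val = 2 then 1 else q.val)
    (π : Equiv.Perm (Fin (n - 1))) : RealC δ (liftP π) := by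
  obtain ⟨k, rfl⟩ : ∃ k, n = k + 4 := ⟨n - 4, by omega⟩
  exact realC_liftP_all' k ha hb π

lemma symC (hn : 4 ≤ n)
    (ha : ∀ x : Sig n, x.val.1.val = 0 → x.val.2.val = n - 1 →
      ∀ q, (δ x q).val = if q.val = n - 1 then 1 else q.val + 1)
    (hb : ∀ x : Sig n, x.val.1.val = 0 → x.val.2.val = 1 →
      ∀ q, (δ x q).val =
        if q.val = 0 then 2 else if q.val = 1 then 2 else if q.val = 2 then 1 else q.val)
    (g : Fin n → Fin n)
    (hg0 : ∀ q : Fin n, q.val ≠ 0 → (g q).val ≠ 0)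
    (hinj : ∀ q q' : Fin n, q.val ≠ 0 → q'.val ≠ 0 → g q = g q' → q = q') :
    RealC δ g := by
  classical
  let φ : Fin (n - 1) → Fin (n - 1) := fun i => predC (g (embedC i)) (hg0 _ (embedC_ne0 i))
  have hφinj : Function.Injective φ := by
    intro i j hij
    have h1 : g (embedC i) = g (embedC j) := by
      have := congrArg (embedC (n := n)) hij
      rwa [embedC_predC, embedC_predC] at this
    exact embedC_injective (hinj _ _ (embedC_ne0 i) (embedC_ne0 j) h1)
  have hφbij : Function.Bijective φ := Finite.injective_iff_bijective.1 hφinj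
  refine (realC_liftP_all hn ha hb (Equiv.ofBijective φ hφbij)).congr (fun q hq => ?_)
  rw [liftP_apply _ hq]
  show embedC (φ (predC q hq)) = g q
  show embedC (predC (g (embedC (predC q hq))) _) = g q
  rw [embedC_predC, embedC_predC]


def Cfin (n : ℕ) : Finset (Fin n) := Finset.univ.filter (fun q => q.val ≠ 0)

lemma mem_Cfin {q : Fin n} : q ∈ Cfin n ↔ q.val ≠ 0 := by simp [Cfin]

lemma card_Cfin (hn : 4 ≤ n) : (Cfin n).card = n - 1 := by
  have h1 : Cfin n = Finset.univ.erase ⟨0, by omega⟩ := by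
    ext q
    simp only [Cfin, Finset.mem_filter, Finset.mem_erase, Finset.mem_univ, true_and, and_true]
    constructor
    · intro h hq
      exact h (by rw [hq])
    · intro h hq0
      exact h (Fin.ext hq0)
  rw [h1, Finset.card_erase_of_mem (Finset.mem_univ _), Finset.card_univ, Fintype.card_fin]

lemma image_erase_eq {g : Fin n → Fin n} {i j : Fin n} (hij : i ≠ j) (h : g i = g j) :
    (Finset.univ.erase j).image g = Finset.univ.image g := by
  apply Finset.Subset.antisymm (Finset.image_subset_image (Finset.erase_subset _ _))
  intro r hr
  simp only [Finset.mem_image] at hr ⊢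
  obtain ⟨q, -, rfl⟩ := hr
  by_cases hq : q = j
  · exact ⟨i, Finset.mem_erase.2 ⟨hij, Finset.mem_univ _⟩, by rw [hq, ← h]⟩
  · exact ⟨q, Finset.mem_erase.2 ⟨hq, Finset.mem_univ _⟩, rfl⟩

lemma ker_of_card {g : Fin n → Fin n} {i j : Fin n} (hij : i ≠ j) (hgij : g i = g j)
    (hcard : n - 1 ≤ (Finset.univ.image g).card) (hn : 4 ≤ n) :
    ∀ q q', g q = g q' → q = q' ∨ (q = i ∧ q' = j) ∨ (q = j ∧ q' = i) := by
  have himg := image_erase_eq hij hgij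
  have hcard2 : (Finset.univ.erase j).card = n - 1 := by
    rw [Finset.card_erase_of_mem (Finset.mem_univ _), Finset.card_univ, Fintype.card_fin]
  have hinj : Set.InjOn g (Finset.univ.erase j : Finset (Fin n)) := by
    rw [← Finset.card_image_iff]
    apply le_antisymm Finset.card_image_le
    rw [hcard2, himg]
    exact hcard
  intro q q' hqq
  by_cases hq : q = j
  · by_cases hq' : q' = j
    · left; rw [hq, hq']
    · right; right
      refine ⟨hq, ?_⟩
      have h2 : g q' = g i := by rw [← hqq, hq, hgij]
      exact hinj (by simp [Finset.mem_coe, Finset.mem_erase, hq'])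
        (by simp [Finset.mem_coe, Finset.mem_erase, hij]) h2
  · by_cases hq' : q' = j
    · right; left
      refine ⟨?_, hq'⟩
      have h2 : g q = g i := by rw [hqq, hq', hgij]
      exact hinj (by simp [Finset.mem_coe, Finset.mem_erase, hq])
        (by simp [Finset.mem_coe, Finset.mem_erase, hij]) h2
    · left
      exact hinj (by simp [Finset.mem_coe, Finset.mem_erase, hq])
        (by simp [Finset.mem_coe, Finset.mem_erase, hq']) hqq

def pairLet (i j : Fin n) (h : i < j) : Sig n := ⟨(i, j), h⟩

section Gen

variable (hn : 4 ≤ n)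
variable (havoid : ∀ (x : Sig n) (q : Fin n), (δ x q).val ≠ 0)
variable (htype : ∀ x : Sig n, rank (δ x) = n - 1 ∧ δ x x.val.1 = δ x x.val.2)
variable (ha : ∀ x : Sig n, x.val.1.val = 0 → x.val.2.val = n - 1 →
      ∀ q, (δ x q).val = if q.val = n - 1 then 1 else q.val + 1)
variable (hb : ∀ x : Sig n, x.val.1.val = 0 → x.val.2.val = 1 →
      ∀ q, (δ x q).val =
        if q.val = 0 then 2 else if q.val = 1 then 2 else if q.val = 2 then 1 else q.val)
variable (hc : ∀ x : Sig n, x.val.1.val = 1 → x.val.2.val = n - 1 →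
      ∀ q, (δ x q).val = if q.val = n - 1 then 2 else q.val + 1)

include hn htype in
lemma pair_ker (i j : Fin n) (h : i < j) :
    ∀ q q', δ (pairLet i j h) q = δ (pairLet i j h) q' →
      q = q' ∨ (q = i ∧ q' = j) ∨ (q = j ∧ q' = i) :=
  ker_of_card (ne_of_lt h) (htype (pairLet i j h)).2
    (le_of_eq (htype (pairLet i j h)).1.symm) hn

include hn havoid htype in
lemma pair_surj (i j : Fin n) (h : i < j) :
    ∀ r : Fin n, r.val ≠ 0 → ∃ q, δ (pairLet i j h) q = r := by
  intro r hr
  have hsub : Finset.univ.image (δ (pairLet i j h)) ⊆ Cfin n := by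
    intro s hs
    simp only [Finset.mem_image] at hs
    obtain ⟨q, -, rfl⟩ := hs
    exact mem_Cfin.2 (havoid _ q)
  have heq : Finset.univ.image (δ (pairLet i j h)) = Cfin n := by
    apply Finset.eq_of_subset_of_card_le hsub
    rw [card_Cfin hn]
    exact le_of_eq (htype (pairLet i j h)).1.symm
  have : r ∈ Finset.univ.image (δ (pairLet i j h)) := heq ▸ mem_Cfin.2 hr
  simp only [Finset.mem_image] at this
  obtain ⟨q, -, hq⟩ := this
  exact ⟨q, hq⟩

include hn ha hb hc in
lemma realC_eps :
    RealC δ (fun q => if q.val = 1 then (⟨2, by omega⟩ : Fin n) else q) := by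
  have hrot : RealC δ
      (fun q => if q.val = 1 then (⟨n - 1, by omega⟩ : Fin n) else ⟨q.val - 1, by
        have := q.isLt; omega⟩) := by
    apply symC hn ha hb
    · intro q hq
      split_ifs with h
      · simp; omega
      · simp; omega
    · intro q q' hq hq' heq
      have hlt := q.isLt
      have hlt' := q'.isLt
      split_ifs at heq with h1 h2 h2 <;>
        (have hv := congrArg Fin.val heq; simp only [] at hv; apply Fin.ext) <;> omega
  have hcw : RealC δ (δ (cLet hn)) := ⟨[cLet hn], fun q _ => TT_singleton ..⟩
  have hcomp := RealC.comp hrot hcw (by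
    intro q hq
    split_ifs with h
    · simp; omega
    · simp; omega)
  refine hcomp.congr (fun q hq => ?_)
  have hlt := q.isLt
  apply Fin.ext
  split_ifs with h1
  · rw [hc (cLet hn) rfl rfl]
    simp
  · rw [hc (cLet hn) rfl rfl]
    have h2 : ((⟨q.val - 1, by omega⟩ : Fin n)).val = q.val - 1 := rfl
    rw [h2]
    rw [if_neg (by omega)]
    omega

include hn ha hb hc in
lemma realC_emerge (u v : Fin n) (hu : u.val ≠ 0) (hv : v.val ≠ 0) (huv : u ≠ v) :
    RealC δ (fun q => if q = v then u else q) := by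
  have h01 : (0 : ℕ) < n - 1 := by omega
  have h11 : (1 : ℕ) < n - 1 := by omega
  set i0 : Fin (n - 1) := ⟨0, h01⟩ with hi0
  set i1 : Fin (n - 1) := ⟨1, h11⟩ with hi1
  set v' : Fin (n - 1) := predC v hv with hv'
  set u' : Fin (n - 1) := predC u hu with hu'
  have hvu' : v' ≠ u' := by
    intro h
    apply huv
    have := congrArg (embedC (n := n)) h
    rw [hv', hu', embedC_predC, embedC_predC] at this
    exact this.symm
  set s := Equiv.swap i0 v' with hs
  set z := s i1 with hz
  have hs0 : s i0 = v' := by rw [hs]; exact Equiv.swap_apply_left i0 v'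
  have hzv : z ≠ v' := by
    intro h
    have h2 : s i1 = s i0 := by rw [hs0, ← h, hz]
    have h3 := s.injective h2
    have h4 : (1 : ℕ) = 0 := congrArg Fin.val h3
    omega
  set t := Equiv.swap z u' with ht
  set τ := t * s with hτ
  have hτ0 : τ i0 = v' := by
    show t (s i0) = v'
    rw [hs0, ht, Equiv.swap_apply_of_ne_of_ne hzv.symm hvu']
  have hτ1 : τ i1 = u' := by
    show t (s i1) = u'
    rw [← hz, ht, Equiv.swap_apply_left]
  have hτR := realC_liftP_all hn ha hb τ
  have hτiR := realC_liftP_all hn ha hb τ⁻¹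
  have hepsR := realC_eps hn ha hb hc
  have c1 := RealC.comp hτiR hepsR (fun q hq => liftP_ne0 _ hq)
  have c2 := RealC.comp c1 hτR (by
    intro q hq
    split_ifs with h
    · show (2 : ℕ) ≠ 0; omega
    · exact liftP_ne0 _ hq)
  refine c2.congr (fun q hq => ?_)
  by_cases hqv : q = v
  · subst hqv
    have h1 : liftP τ⁻¹ q = embedC (τ⁻¹ v') := by
      rw [liftP_apply _ hq, hv']
    have h2 : τ⁻¹ v' = i0 := by rw [← hτ0, show ∀ x, τ⁻¹ (τ x) = x from fun x => by simp]
    rw [h1, h2]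
    have h3 : (embedC (n := n) i0).val = 1 := rfl
    rw [if_pos h3]
    have h4 : ((⟨2, by omega⟩ : Fin n)).val ≠ 0 := by show (2 : ℕ) ≠ 0; omega
    have h5 : liftP τ (⟨2, by omega⟩ : Fin n) = embedC (τ (predC _ h4)) := liftP_apply _ h4
    rw [h5]
    have h6 : predC (⟨2, by omega⟩ : Fin n) h4 = i1 := rfl
    rw [h6, hτ1, hu', embedC_predC, if_pos rfl]
  · have h1 : liftP τ⁻¹ q = embedC (τ⁻¹ (predC q hq)) := liftP_apply _ hq
    have hr : τ⁻¹ (predC q hq) ≠ i0 := by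
      intro h
      apply hqv
      have h2 : predC q hq = τ i0 := by rw [← h, show ∀ x, τ (τ⁻¹ x) = x from fun x => by simp]
      rw [hτ0] at h2
      have := congrArg (embedC (n := n)) h2
      rw [embedC_predC, hv', embedC_predC] at this
      exact this
    rw [h1]
    have h3 : (embedC (τ⁻¹ (predC q hq))).val ≠ 1 := by
      rw [embedC_val]
      intro h
      apply hr
      apply Fin.ext
      show (τ⁻¹ (predC q hq)).val = 0
      omega
    rw [if_neg h3, liftP_embedC, show ∀ x, τ (τ⁻¹ x) = x from fun x => by simp, embedC_predC, if_neg hqv]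

include hn havoid htype ha hb in
lemma gen_full (f : Fin n → Fin n) (hAv : ∀ q, (f q).val ≠ 0)
    (hcard : (Finset.univ.image f).card = n - 1) :
    ∃ w : List (Sig n), ∀ q, TT δ w q = f q := by
  classical
  have hltc : (Finset.univ.image f).card < (Finset.univ : Finset (Fin n)).card := by
    rw [hcard, Finset.card_univ, Fintype.card_fin]; omega
  obtain ⟨i0, -, j0, -, hij0, hfij0⟩ := Finset.exists_ne_map_eq_of_card_lt_of_maps_to hltc
    (fun a _ => Finset.mem_image_of_mem f (Finset.mem_univ a))
  obtain ⟨i, j, hlt2, hfij⟩ : ∃ i j : Fin n, i < j ∧ f i = f j := by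
    rcases lt_or_gt_of_ne hij0 with h | h
    · exact ⟨i0, j0, h, hfij0⟩
    · exact ⟨j0, i0, h, hfij0.symm⟩
  set d := δ (pairLet i j hlt2) with hd
  have hdker := pair_ker hn htype i j hlt2
  have hdsurj := pair_surj hn havoid htype i j hlt2
  have hdAv : ∀ q, (d q).val ≠ 0 := fun q => havoid _ q
  have hdij : d i = d j := (htype (pairLet i j hlt2)).2
  have hfker := ker_of_card (ne_of_lt hlt2) hfij (le_of_eq hcard.symm) hn
  set πf : Fin n → Fin n :=
    fun r => if h : r.val ≠ 0 then f (hdsurj r h).choose else r with hπf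
  have hπd : ∀ q, πf (d q) = f q := by
    intro q
    have h0 := hdAv q
    have e1 : πf (d q) = f (hdsurj (d q) h0).choose := dif_pos h0
    have hch := (hdsurj (d q) h0).choose_spec
    rcases hdker _ _ hch with h | ⟨h1, h2⟩ | ⟨h1, h2⟩
    · rw [e1, h]
    · rw [e1, h1, hfij, ← h2]
    · rw [e1, h1, ← hfij, ← h2]
  have hπAv : ∀ r : Fin n, r.val ≠ 0 → (πf r).val ≠ 0 := by
    intro r hr
    have e1 : πf r = f (hdsurj r hr).choose := dif_pos hr
    rw [e1]
    exact hAv _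
  have hπinj : ∀ r r' : Fin n, r.val ≠ 0 → r'.val ≠ 0 → πf r = πf r' → r = r' := by
    intro r r' hr hr' heq
    have e1 : πf r = f (hdsurj r hr).choose := dif_pos hr
    have e2 : πf r' = f (hdsurj r' hr').choose := dif_pos hr'
    rw [e1, e2] at heq
    have c1 := (hdsurj r hr).choose_spec
    have c2 := (hdsurj r' hr').choose_spec
    rcases hfker _ _ heq with h | ⟨h1, h2⟩ | ⟨h1, h2⟩
    · rw [← c1, ← c2, h]
    · rw [← c1, ← c2, h1, h2]; exact hdij
    · rw [← c1, ← c2, h1, h2]; exact hdij.symm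
  obtain ⟨wπ, hwπ⟩ := symC hn ha hb πf hπAv hπinj
  refine ⟨pairLet i j hlt2 :: wπ, fun q => ?_⟩
  rw [TT_cons, ← hd, hwπ _ (hdAv q), hπd q]

include hn havoid htype ha hb hc in
lemma gen_bounded : ∀ (N : ℕ) (f : Fin n → Fin n), (∀ q, (f q).val ≠ 0) →
    n - 1 - (Finset.univ.image f).card ≤ N → ∃ w : List (Sig n), ∀ q, TT δ w q = f q := by
  intro N
  induction N with
  | zero =>
    intro f hAv hN
    have hsub : Finset.univ.image f ⊆ Cfin n := by
      intro r hr
      simp only [Finset.mem_image] at hr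
      obtain ⟨q, -, rfl⟩ := hr
      exact mem_Cfin.2 (hAv q)
    have hle := Finset.card_le_card hsub
    rw [card_Cfin hn] at hle
    exact gen_full hn havoid htype ha hb f hAv (by omega)
  | succ N IH =>
    intro f hAv hN
    by_cases hcard : (Finset.univ.image f).card = n - 1
    · exact gen_full hn havoid htype ha hb f hAv hcard
    · classical
      have hsub : Finset.univ.image f ⊆ Cfin n := by
        intro r hr
        simp only [Finset.mem_image] at hr
        obtain ⟨q, -, rfl⟩ := hr
        exact mem_Cfin.2 (hAv q)
      have hle := Finset.card_le_card hsub
      rw [card_Cfin hn] at hle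
      have hvex : ∃ v ∈ Cfin n, v ∉ Finset.univ.image f := by
        by_contra hcon
        push_neg at hcon
        have h2 := Finset.card_le_card hcon
        rw [card_Cfin hn] at h2
        omega
      obtain ⟨v, hvC, hvim⟩ := hvex
      have hvAv : v.val ≠ 0 := mem_Cfin.1 hvC
      have hltu : (Finset.univ.image f).card < (Finset.univ : Finset (Fin n)).card := by
        rw [Finset.card_univ, Fintype.card_fin]; omega
      obtain ⟨i, -, j, -, hij, hfij⟩ := Finset.exists_ne_map_eq_of_card_lt_of_maps_to hltu
        (fun a _ => Finset.mem_image_of_mem f (Finset.mem_univ a))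
      set f' := Function.update f i v with hf'
      have hf'Av : ∀ q, (f' q).val ≠ 0 := by
        intro q
        rw [hf', Function.update_apply]
        split_ifs
        exacts [hvAv, hAv q]
      have himg : Finset.univ.image f' = insert v (Finset.univ.image f) := by
        calc Finset.univ.image f'
            = (insert i (Finset.univ.erase i)).image f' := by
              rw [Finset.insert_erase (Finset.mem_univ i)]
          _ = insert (f' i) ((Finset.univ.erase i).image f') := Finset.image_insert ..
          _ = insert v ((Finset.univ.erase i).image f) := by
              rw [hf', Function.update_self]
              congr 1
              apply Finset.image_congr
              intro x hx
              have hxi : x ≠ i := (Finset.mem_erase.1 (Finset.mem_coe.1 hx)).1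
              exact Function.update_of_ne hxi v f
          _ = insert v (Finset.univ.image f) := by
              rw [image_erase_eq hij.symm hfij.symm]
      have hcard' : n - 1 - (Finset.univ.image f').card ≤ N := by
        rw [himg, Finset.card_insert_of_notMem hvim]
        omega
      obtain ⟨w', hw'⟩ := IH f' hf'Av hcard'
      have hu : (f i).val ≠ 0 := hAv i
      have hne : f i ≠ v := fun h => hvim (h ▸ Finset.mem_image_of_mem f (Finset.mem_univ i))
      obtain ⟨we, hwe⟩ := realC_emerge hn ha hb hc (f i) v hu hvAv hne
      refine ⟨w' ++ we, fun q => ?_⟩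
      rw [TT_append, hw' q, hwe _ (hf'Av q)]
      by_cases hqi : q = i
      · subst hqi
        rw [hf', Function.update_self]
        exact if_pos rfl
      · rw [hf', Function.update_of_ne hqi]
        exact if_neg (fun h : f q = v => hvim (h ▸ Finset.mem_image_of_mem f (Finset.mem_univ q)))

include hn havoid htype ha hb hc in
lemma genAll (f : Fin n → Fin n) (hAv : ∀ q, (f q).val ≠ 0) :
    ∃ w : List (Sig n), ∀ q, TT δ w q = f q :=
  gen_bounded hn havoid htype ha hb hc n f hAv (by omega)

end Gen


def BB (δ : Sig n → Fin n → Fin n) (X Y : Set (Fin n)) : Set (List (Sig n)) :=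
  {w | (∀ i ∈ X, (TT δ w i).val = n - 1) ∧ ∀ i ∈ Y, (TT δ w i).val ≠ n - 1}

def KK (δ : Sig n → Fin n → Fin n) (q : Fin n) : Set (List (Sig n)) :=
  {w | (TT δ w q).val = n - 1}

lemma atomInt_eq (δ : Sig n → Fin n → Fin n) (S : Set (Fin n)) :
    atomInt (KK δ) S = BB δ S Sᶜ := by
  ext w
  simp only [atomInt, BB, KK, Set.mem_setOf_eq]
  constructor
  · intro h
    exact ⟨fun i hi => (h i).1 hi, fun i hi => (h i).2 hi⟩
  · intro h i
    exact ⟨fun hi => h.1 i hi, fun hi => h.2 i hi⟩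

lemma leftQuot_atomInt (δ : Sig n → Fin n → Fin n) (S : Set (Fin n)) (w : List (Sig n)) :
    leftQuot (atomInt (KK δ) S) w = BB δ (TT δ w '' S) (TT δ w '' Sᶜ) := by
  ext x
  simp only [leftQuot, atomInt, BB, KK, Set.mem_setOf_eq]
  constructor
  · intro h
    constructor
    · rintro r ⟨i, hi, rfl⟩
      have h2 := (h i).1 hi
      rwa [TT_append] at h2
    · rintro r ⟨i, hi, rfl⟩
      have h2 := (h i).2 hi
      rw [TT_append] at h2
      exact h2
  · rintro ⟨h1, h2⟩ i
    constructor
    · intro hi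
      show (TT δ (w ++ x) i).val = n - 1
      rw [TT_append]
      exact h1 _ ⟨i, hi, rfl⟩
    · intro hi hcon
      apply h2 _ ⟨i, hi, rfl⟩
      rw [← TT_append]
      exact hcon

lemma mem_BB_iff {δ : Sig n → Fin n → Fin n} {w : List (Sig n)} {f : Fin n → Fin n}
    (h : ∀ q, TT δ w q = f q) (X Y : Set (Fin n)) :
    w ∈ BB δ X Y ↔ (∀ i ∈ X, (f i).val = n - 1) ∧ ∀ i ∈ Y, (f i).val ≠ n - 1 := by
  unfold BB
  simp only [Set.mem_setOf_eq, h]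

lemma BB_empty {δ : Sig n → Fin n → Fin n} {X Y : Set (Fin n)}
    (hi : ∃ i, i ∈ X ∧ i ∈ Y) : BB δ X Y = ∅ := by
  obtain ⟨i, hi1, hi2⟩ := hi
  apply Set.eq_empty_iff_forall_notMem.2
  rintro w ⟨h1, h2⟩
  exact h2 i hi2 (h1 i hi1)

open Classical in
noncomputable def indf (hn : 4 ≤ n) (Z : Set (Fin n)) : Fin n → Fin n :=
  fun q => if q ∈ Z then ⟨n - 1, by omega⟩ else ⟨1, by omega⟩

lemma indf_av (hn : 4 ≤ n) (Z : Set (Fin n)) : ∀ q, ((indf hn Z) q).val ≠ 0 := by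
  intro q
  unfold indf
  split_ifs
  · show n - 1 ≠ 0; omega
  · show (1 : ℕ) ≠ 0; omega

lemma ind_mem_BB {δ : Sig n → Fin n → Fin n} (hn : 4 ≤ n) {w : List (Sig n)} {Z : Set (Fin n)}
    (hw : ∀ q, TT δ w q = indf hn Z q) (X Y : Set (Fin n)) :
    w ∈ BB δ X Y ↔ (∀ i ∈ X, i ∈ Z) ∧ (∀ i ∈ Y, i ∉ Z) := by
  rw [mem_BB_iff hw]
  unfold indf
  constructor
  · rintro ⟨h1, h2⟩
    constructor
    · intro i hi
      by_contra hiZ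
      have h3 := h1 i hi
      rw [if_neg hiZ] at h3
      exact absurd h3 (by show (1 : ℕ) ≠ n - 1; omega)
    · intro i hi hiZ
      have h3 := h2 i hi
      rw [if_pos hiZ] at h3
      exact h3 rfl
  · rintro ⟨h1, h2⟩
    constructor
    · intro i hi
      rw [if_pos (h1 i hi)]
    · intro i hi
      rw [if_neg (h2 i hi)]
      show (1 : ℕ) ≠ n - 1
      omega

lemma surj_exists (hn : 4 ≤ n) (P X Y : Set (Fin n))
    (hX : ∀ q ∈ X, q.val ≠ 0) (hY : ∀ q ∈ Y, q.val ≠ 0)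
    (hxc : X.ncard ≤ P.ncard) (hyc : Y.ncard ≤ Pᶜ.ncard)
    (hxn : P.Nonempty → X.Nonempty) (hyn : Pᶜ.Nonempty → Y.Nonempty) :
    ∃ f : Fin n → Fin n, (∀ q, (f q).val ≠ 0) ∧ f '' P = X ∧ f '' Pᶜ = Y := by
  classical
  have hPf : P.Finite := P.toFinite
  have hXf : X.Finite := X.toFinite
  have hYf : Y.Finite := Y.toFinite
  have hPcf : Pᶜ.Finite := Pᶜ.toFinite
  have hle1 : hXf.toFinset.card ≤ hPf.toFinset.card := by
    rw [← Set.ncard_eq_toFinset_card _ hXf, ← Set.ncard_eq_toFinset_card _ hPf]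
    exact hxc
  obtain ⟨S', hS'sub, hS'card⟩ := Finset.exists_subset_card_eq hle1
  have e : {x // x ∈ S'} ≃ {x // x ∈ hXf.toFinset} := Finset.equivOfCardEq hS'card
  have hle2 : hYf.toFinset.card ≤ hPcf.toFinset.card := by
    rw [← Set.ncard_eq_toFinset_card _ hYf, ← Set.ncard_eq_toFinset_card _ hPcf]
    exact hyc
  obtain ⟨T', hT'sub, hT'card⟩ := Finset.exists_subset_card_eq hle2
  have e2 : {x // x ∈ T'} ≃ {x // x ∈ hYf.toFinset} := Finset.equivOfCardEq hT'card
  set dX : Fin n := if h : X.Nonempty then h.some else ⟨1, by omega⟩ with hdX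
  set dY : Fin n := if h : Y.Nonempty then h.some else ⟨1, by omega⟩ with hdY
  have hdXmem : X.Nonempty → dX ∈ X := fun h => by rw [hdX, dif_pos h]; exact h.some_mem
  have hdYmem : Y.Nonempty → dY ∈ Y := fun h => by rw [hdY, dif_pos h]; exact h.some_mem
  have heX : ∀ (q : Fin n) (h : q ∈ S'), ((e ⟨q, h⟩ : {x // x ∈ hXf.toFinset}) : Fin n) ∈ X :=
    fun q h => (Set.Finite.mem_toFinset hXf).1 (e ⟨q, h⟩).2
  have heY : ∀ (q : Fin n) (h : q ∈ T'), ((e2 ⟨q, h⟩ : {x // x ∈ hYf.toFinset}) : Fin n) ∈ Y :=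
    fun q h => (Set.Finite.mem_toFinset hYf).1 (e2 ⟨q, h⟩).2
  have hS'P : ∀ q ∈ S', q ∈ P := fun q hq => (Set.Finite.mem_toFinset hPf).1 (hS'sub hq)
  have hT'Pc : ∀ q ∈ T', q ∈ Pᶜ := fun q hq => (Set.Finite.mem_toFinset hPcf).1 (hT'sub hq)
  set f : Fin n → Fin n := fun q =>
    if h : q ∈ S' then ((e ⟨q, h⟩ : {x // x ∈ hXf.toFinset}) : Fin n)
    else if h2 : q ∈ T' then ((e2 ⟨q, h2⟩ : {x // x ∈ hYf.toFinset}) : Fin n)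
    else if q ∈ P then dX else dY with hf
  have hf1 : ∀ (q : Fin n) (h : q ∈ S'), f q = ((e ⟨q, h⟩ : {x // x ∈ hXf.toFinset}) : Fin n) := by
    intro q h
    simp only [hf]
    rw [dif_pos h]
  have hf2 : ∀ (q : Fin n) (h : q ∉ S') (h2 : q ∈ T'),
      f q = ((e2 ⟨q, h2⟩ : {x // x ∈ hYf.toFinset}) : Fin n) := by
    intro q h h2
    simp only [hf]
    rw [dif_neg h, dif_pos h2]
  have hf3 : ∀ (q : Fin n), q ∉ S' → q ∉ T' → q ∈ P → f q = dX := by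
    intro q h h2 h3
    simp only [hf]
    rw [dif_neg h, dif_neg h2, if_pos h3]
  have hf4 : ∀ (q : Fin n), q ∉ S' → q ∉ T' → q ∉ P → f q = dY := by
    intro q h h2 h3
    simp only [hf]
    rw [dif_neg h, dif_neg h2, if_neg h3]
  refine ⟨f, ?_, ?_, ?_⟩
  · intro q
    by_cases h1 : q ∈ S'
    · rw [hf1 q h1]; exact hX _ (heX q h1)
    · by_cases h2 : q ∈ T'
      · rw [hf2 q h1 h2]; exact hY _ (heY q h2)
      · by_cases h3 : q ∈ P
        · rw [hf3 q h1 h2 h3]; exact hX _ (hdXmem (hxn ⟨q, h3⟩))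
        · rw [hf4 q h1 h2 h3]; exact hY _ (hdYmem (hyn ⟨q, h3⟩))
  · apply Set.Subset.antisymm
    · rintro r ⟨q, hqP, rfl⟩
      by_cases h1 : q ∈ S'
      · rw [hf1 q h1]
        exact heX q h1
      · by_cases h2 : q ∈ T'
        · exact absurd hqP (hT'Pc q h2)
        · rw [hf3 q h1 h2 hqP]
          exact hdXmem (hxn ⟨q, hqP⟩)
    · intro x hx
      have hxF : x ∈ hXf.toFinset := (Set.Finite.mem_toFinset hXf).2 hx
      have haS' : ((e.symm ⟨x, hxF⟩ : {x // x ∈ S'}) : Fin n) ∈ S' := (e.symm ⟨x, hxF⟩).2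
      refine ⟨(e.symm ⟨x, hxF⟩ : {x // x ∈ S'}), hS'P _ haS', ?_⟩
      rw [hf1 _ haS']
      have h5 : (⟨((e.symm ⟨x, hxF⟩ : {x // x ∈ S'}) : Fin n), haS'⟩ : {x // x ∈ S'})
          = e.symm ⟨x, hxF⟩ := Subtype.ext rfl
      rw [h5, Equiv.apply_symm_apply]
  · apply Set.Subset.antisymm
    · rintro r ⟨q, hqPc, rfl⟩
      have h1 : q ∉ S' := fun h => hqPc (hS'P q h)
      by_cases h2 : q ∈ T'
      · rw [hf2 q h1 h2]
        exact heY q h2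
      · rw [hf4 q h1 h2 hqPc]
        exact hdYmem (hyn ⟨q, hqPc⟩)
    · intro y hy
      have hyF : y ∈ hYf.toFinset := (Set.Finite.mem_toFinset hYf).2 hy
      have haT' : ((e2.symm ⟨y, hyF⟩ : {x // x ∈ T'}) : Fin n) ∈ T' := (e2.symm ⟨y, hyF⟩).2
      have haPc : ((e2.symm ⟨y, hyF⟩ : {x // x ∈ T'}) : Fin n) ∈ Pᶜ := hT'Pc _ haT'
      have h1 : ((e2.symm ⟨y, hyF⟩ : {x // x ∈ T'}) : Fin n) ∉ S' := fun h => haPc (hS'P _ h)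
      refine ⟨(e2.symm ⟨y, hyF⟩ : {x // x ∈ T'}), haPc, ?_⟩
      rw [hf2 _ h1 haT']
      have h5 : (⟨((e2.symm ⟨y, hyF⟩ : {x // x ∈ T'}) : Fin n), haT'⟩ : {x // x ∈ T'})
          = e2.symm ⟨y, hyF⟩ := Subtype.ext rfl
      rw [h5, Equiv.apply_symm_apply]

def DfinY (n t : ℕ) (X : Finset (Fin n)) : Finset (Finset (Fin n) × Finset (Fin n)) :=
  (Finset.Icc 1 t).biUnion fun y => ((Cfin n \ X).powersetCard y).image fun Y => (X, Y)

lemma mem_DfinY {t : ℕ} {X : Finset (Fin n)} {p : Finset (Fin n) × Finset (Fin n)} :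
    p ∈ DfinY n t X ↔ p.1 = X ∧ p.2 ⊆ Cfin n \ X ∧ 1 ≤ p.2.card ∧ p.2.card ≤ t := by
  simp only [DfinY, Finset.mem_biUnion, Finset.mem_image, Finset.mem_powersetCard,
    Finset.mem_Icc]
  constructor
  · rintro ⟨y, ⟨hy1, hy2⟩, Y, ⟨hYsub, hYcard⟩, rfl⟩
    refine ⟨rfl, hYsub, ?_, ?_⟩
    · show 1 ≤ Y.card; omega
    · show Y.card ≤ t; omega
  · rintro ⟨h1, h2, h3, h4⟩
    exact ⟨p.2.card, ⟨h3, h4⟩, p.2, ⟨h2, rfl⟩, by rw [← h1]⟩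

lemma card_DfinY (t : ℕ) (X : Finset (Fin n)) (hsub : X ⊆ Cfin n) :
    (DfinY n t X).card = ∑ y ∈ Finset.Icc 1 t, ((Cfin n).card - X.card).choose y := by
  rw [DfinY, Finset.card_biUnion]
  · apply Finset.sum_congr rfl
    intro y hy
    rw [Finset.card_image_of_injective _ (fun Y Y' h => (Prod.ext_iff.1 h).2),
      Finset.card_powersetCard, Finset.card_sdiff_of_subset hsub]
  · intro y hy y' hy' hne
    apply Finset.disjoint_left.2
    intro p hp hp'
    simp only [Finset.mem_image, Finset.mem_powersetCard] at hp hp'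
    obtain ⟨Y, ⟨-, hc⟩, rfl⟩ := hp
    obtain ⟨Y', ⟨-, hc'⟩, he⟩ := hp'
    apply hne
    have h2 : Y' = Y := (Prod.ext_iff.1 he).2
    rw [← hc, ← hc', h2]

def Dfin (n s t : ℕ) : Finset (Finset (Fin n) × Finset (Fin n)) :=
  (Finset.Icc 1 s).biUnion fun x => ((Cfin n).powersetCard x).biUnion fun X => DfinY n t X

lemma mem_Dfin {s t : ℕ} {p : Finset (Fin n) × Finset (Fin n)} :
    p ∈ Dfin n s t ↔ p.1 ⊆ Cfin n ∧ p.2 ⊆ Cfin n \ p.1 ∧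
      1 ≤ p.1.card ∧ p.1.card ≤ s ∧ 1 ≤ p.2.card ∧ p.2.card ≤ t := by
  simp only [Dfin, Finset.mem_biUnion, Finset.mem_powersetCard, Finset.mem_Icc]
  constructor
  · rintro ⟨x, ⟨hx1, hx2⟩, X, ⟨hXsub, hXcard⟩, hp⟩
    rw [mem_DfinY] at hp
    obtain ⟨h1, h2, h3, h4⟩ := hp
    subst h1
    exact ⟨hXsub, h2, by omega, by omega, h3, h4⟩
  · rintro ⟨h1, h2, h3, h4, h5, h6⟩
    exact ⟨p.1.card, ⟨h3, h4⟩, p.1, ⟨h1, rfl⟩, mem_DfinY.2 ⟨rfl, h2, h5, h6⟩⟩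

lemma card_Dfin (hn : 4 ≤ n) (s t : ℕ) :
    (Dfin n s t).card = ∑ x ∈ Finset.Icc 1 s, ∑ y ∈ Finset.Icc 1 t,
      (n - 1).choose x * ((n - 1 - x).choose y) := by
  rw [Dfin, Finset.card_biUnion]
  · apply Finset.sum_congr rfl
    intro x hx
    rw [Finset.card_biUnion]
    · have hcongr : ∀ X ∈ (Cfin n).powersetCard x,
          (DfinY n t X).card = ∑ y ∈ Finset.Icc 1 t, (n - 1 - x).choose y := by
        intro X hX
        rw [Finset.mem_powersetCard] at hX
        rw [card_DfinY t X hX.1, card_Cfin hn, hX.2]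
      rw [Finset.sum_congr rfl hcongr, Finset.sum_const, Finset.card_powersetCard,
        card_Cfin hn, smul_eq_mul, Finset.mul_sum]
    · intro X hX X' hX' hne
      apply Finset.disjoint_left.2
      intro p hp hp'
      rw [mem_DfinY] at hp hp'
      exact hne (hp.1.symm.trans hp'.1)
  · intro x hx x' hx' hne
    apply Finset.disjoint_left.2
    intro p hp hp'
    simp only [Finset.mem_biUnion, Finset.mem_powersetCard] at hp hp'
    obtain ⟨X, ⟨-, hc⟩, hp⟩ := hp
    obtain ⟨X', ⟨-, hc'⟩, hp'⟩ := hp'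
    rw [mem_DfinY] at hp hp'
    exact hne (by rw [← hc, ← hc', ← hp.1, ← hp'.1])

def Yfin (n : ℕ) : Finset (Finset (Fin n)) := (Cfin n).powerset.erase ∅

lemma mem_Yfin {Y : Finset (Fin n)} : Y ∈ Yfin n ↔ Y ≠ ∅ ∧ Y ⊆ Cfin n := by
  simp [Yfin, Finset.mem_erase, Finset.mem_powerset]

lemma card_Yfin (hn : 4 ≤ n) : (Yfin n).card = 2 ^ (n - 1) - 1 := by
  rw [Yfin, Finset.card_erase_of_mem (Finset.empty_mem_powerset _),
    Finset.card_powerset, card_Cfin hn]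


section Main

variable (hn : 4 ≤ n)
variable (havoid : ∀ (x : Sig n) (q : Fin n), (δ x q).val ≠ 0)
variable (htype : ∀ x : Sig n, rank (δ x) = n - 1 ∧ δ x x.val.1 = δ x x.val.2)
variable (ha : ∀ x : Sig n, x.val.1.val = 0 → x.val.2.val = n - 1 →
      ∀ q, (δ x q).val = if q.val = n - 1 then 1 else q.val + 1)
variable (hb : ∀ x : Sig n, x.val.1.val = 0 → x.val.2.val = 1 →
      ∀ q, (δ x q).val =
        if q.val = 0 then 2 else if q.val = 1 then 2 else if q.val = 2 then 1 else q.val)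
variable (hc : ∀ x : Sig n, x.val.1.val = 1 → x.val.2.val = n - 1 →
      ∀ q, (δ x q).val = if q.val = n - 1 then 2 else q.val + 1)

include hn havoid htype ha hb hc in
lemma ind_word (Z : Set (Fin n)) : ∃ w : List (Sig n), ∀ q, TT δ w q = indf hn Z q :=
  genAll hn havoid htype ha hb hc (indf hn Z) (indf_av hn Z)

include hn havoid htype ha hb hc in
lemma atom_nonempty (S : Set (Fin n)) : (atomInt (KK δ) S).Nonempty := by
  obtain ⟨w, hw⟩ := ind_word hn havoid htype ha hb hc S
  refine ⟨w, ?_⟩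
  rw [atomInt_eq]
  exact (ind_mem_BB hn hw S Sᶜ).2 ⟨fun i hi => hi, fun i hi => hi⟩

lemma ncard_compl_fin (S : Set (Fin n)) : Sᶜ.ncard = n - S.ncard := by
  have h2 := Set.ncard_add_ncard_compl S
  rw [Nat.card_eq_fintype_card, Fintype.card_fin] at h2
  omega

lemma TT_nil_image (S : Set (Fin n)) (δ' : Sig n → Fin n → Fin n) :
    TT δ' ([] : List (Sig n)) '' S = S := by
  rw [show TT δ' ([] : List (Sig n)) = fun q => q from rfl]
  exact Set.image_id' S

include hn havoid htype ha hb hc in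
lemma quot_proper (S : Set (Fin n)) (hS1 : S.Nonempty) (hS2 : Sᶜ.Nonempty) :
    quotients (atomInt (KK δ) S) = insert (atomInt (KK δ) S)
      (insert ∅ ((fun p : Finset (Fin n) × Finset (Fin n) => BB δ ↑p.1 ↑p.2) ''
        ↑(Dfin n S.ncard (n - S.ncard)))) := by
  classical
  apply Set.Subset.antisymm
  · rintro L ⟨w, rfl⟩
    rw [leftQuot_atomInt]
    cases w with
    | nil =>
      rw [TT_nil_image, TT_nil_image, ← atomInt_eq]
      exact Set.mem_insert _ _
    | cons xh wt =>
      have hXC : ∀ r ∈ TT δ (xh :: wt) '' S, r.val ≠ 0 := by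
        rintro r ⟨i, hi, rfl⟩
        exact TT_ne0 havoid wt xh i
      have hYC : ∀ r ∈ TT δ (xh :: wt) '' Sᶜ, r.val ≠ 0 := by
        rintro r ⟨i, hi, rfl⟩
        exact TT_ne0 havoid wt xh i
      have hXne : (TT δ (xh :: wt) '' S).Nonempty := hS1.image _
      have hYne : (TT δ (xh :: wt) '' Sᶜ).Nonempty := hS2.image _
      have hXcard : (TT δ (xh :: wt) '' S).ncard ≤ S.ncard := Set.ncard_image_le S.toFinite
      have hYcard : (TT δ (xh :: wt) '' Sᶜ).ncard ≤ n - S.ncard := by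
        rw [← ncard_compl_fin S]
        exact Set.ncard_image_le Sᶜ.toFinite
      by_cases hdisj : ∃ i, i ∈ TT δ (xh :: wt) '' S ∧ i ∈ TT δ (xh :: wt) '' Sᶜ
      · rw [BB_empty hdisj]
        exact Set.mem_insert_of_mem _ (Set.mem_insert _ _)
      · apply Set.mem_insert_of_mem
        apply Set.mem_insert_of_mem
        have hXfin : (TT δ (xh :: wt) '' S).Finite := Set.toFinite _
        have hYfin : (TT δ (xh :: wt) '' Sᶜ).Finite := Set.toFinite _
        refine ⟨(hXfin.toFinset, hYfin.toFinset), ?_, ?_⟩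
        · apply Finset.mem_coe.2
          apply mem_Dfin.2
          refine ⟨?_, ?_, ?_, ?_, ?_, ?_⟩
          · intro r hr
            exact mem_Cfin.2 (hXC r (hXfin.mem_toFinset.1 hr))
          · intro r hr
            apply Finset.mem_sdiff.2
            refine ⟨mem_Cfin.2 (hYC r (hYfin.mem_toFinset.1 hr)), fun hcon => ?_⟩
            exact hdisj ⟨r, hXfin.mem_toFinset.1 hcon, hYfin.mem_toFinset.1 hr⟩
          · exact Finset.card_pos.2 ⟨hXne.some, hXfin.mem_toFinset.2 hXne.some_mem⟩
          · rw [← Set.ncard_eq_toFinset_card _ hXfin]; exact hXcard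
          · exact Finset.card_pos.2 ⟨hYne.some, hYfin.mem_toFinset.2 hYne.some_mem⟩
          · rw [← Set.ncard_eq_toFinset_card _ hYfin]; exact hYcard
        · simp only [Set.Finite.coe_toFinset]
  · intro L hL
    rcases Set.mem_insert_iff.1 hL with rfl | hL2
    · exact ⟨[], by rw [leftQuot_atomInt, TT_nil_image, TT_nil_image, ← atomInt_eq]⟩
    · rcases Set.mem_insert_iff.1 hL2 with rfl | hL3
      · obtain ⟨w, hw⟩ := ind_word hn havoid htype ha hb hc (∅ : Set (Fin n))
        refine ⟨w, ?_⟩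
        rw [leftQuot_atomInt, show TT δ w = indf hn ∅ from funext hw]
        apply BB_empty
        refine ⟨⟨1, by omega⟩, ?_, ?_⟩
        · obtain ⟨i, hi⟩ := hS1
          refine ⟨i, hi, ?_⟩
          unfold indf
          rw [if_neg (Set.notMem_empty i)]
        · obtain ⟨i, hi⟩ := hS2
          refine ⟨i, hi, ?_⟩
          unfold indf
          rw [if_neg (Set.notMem_empty i)]
      · obtain ⟨p, hp, rfl⟩ := hL3
        have hpD := mem_Dfin.1 (Finset.mem_coe.1 hp)
        obtain ⟨h1, h2, h3, h4, h5, h6⟩ := hpD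
        obtain ⟨f, hfAv, hfP, hfPc⟩ := surj_exists hn S ↑p.1 ↑p.2
          (fun q hq => mem_Cfin.1 (h1 (Finset.mem_coe.1 hq)))
          (fun q hq => mem_Cfin.1 (Finset.mem_sdiff.1 (h2 (Finset.mem_coe.1 hq))).1)
          (by rw [Set.ncard_coe_finset]; exact h4)
          (by rw [Set.ncard_coe_finset, ncard_compl_fin S]; exact h6)
          (fun _ => Finset.coe_nonempty.2 (Finset.card_pos.1 h3))
          (fun _ => Finset.coe_nonempty.2 (Finset.card_pos.1 h5))
        obtain ⟨w, hw⟩ := genAll hn havoid htype ha hb hc f hfAv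
        exact ⟨w, by rw [leftQuot_atomInt, show TT δ w = f from funext hw, hfP, hfPc]⟩


include hn havoid htype ha hb hc in
lemma wit_pair_mem {p : Finset (Fin n) × Finset (Fin n)}
    (h2 : p.2 ⊆ Cfin n \ p.1) :
    ∃ w : List (Sig n), (∀ q, TT δ w q = indf hn (↑p.1 : Set (Fin n)) q) ∧
      w ∈ BB δ ↑p.1 ↑p.2 := by
  obtain ⟨w, hw⟩ := ind_word hn havoid htype ha hb hc (↑p.1 : Set (Fin n))
  refine ⟨w, hw, (ind_mem_BB hn hw _ _).2 ⟨fun i hi => hi, fun i hi hcon => ?_⟩⟩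
  exact (Finset.mem_sdiff.1 (h2 (Finset.mem_coe.1 hi))).2 (Finset.mem_coe.1 hcon)

include hn havoid htype ha hb hc in
lemma wit_pair_mem2 {p : Finset (Fin n) × Finset (Fin n)}
    (h2 : p.2 ⊆ Cfin n \ p.1) :
    ∃ w : List (Sig n), (∀ q, TT δ w q = indf hn ((↑p.2 : Set (Fin n))ᶜ) q) ∧
      w ∈ BB δ ↑p.1 ↑p.2 := by
  obtain ⟨w, hw⟩ := ind_word hn havoid htype ha hb hc ((↑p.2 : Set (Fin n))ᶜ)
  refine ⟨w, hw, (ind_mem_BB hn hw _ _).2 ⟨fun i hi hcon => ?_, fun i hi hcon => hcon hi⟩⟩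
  exact (Finset.mem_sdiff.1 (h2 (Finset.mem_coe.1 hcon))).2 (Finset.mem_coe.1 hi)

include hn havoid htype ha hb hc in
lemma BB_injOn_Dfin (s t : ℕ) :
    Set.InjOn (fun p : Finset (Fin n) × Finset (Fin n) => BB δ ↑p.1 ↑p.2)
      ↑(Dfin n s t) := by
  intro p hp p' hp' heq
  obtain ⟨-, h2, -, -, -, -⟩ := mem_Dfin.1 (Finset.mem_coe.1 hp)
  obtain ⟨-, h2', -, -, -, -⟩ := mem_Dfin.1 (Finset.mem_coe.1 hp')
  simp only [] at heq
  have hfst : p.1 = p'.1 := by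
    apply Finset.Subset.antisymm
    · obtain ⟨w, hw, hmem⟩ := wit_pair_mem hn havoid htype ha hb hc h2'
      rw [← heq] at hmem
      have hcrit := ((ind_mem_BB hn hw _ _).1 hmem).1
      intro i hi
      exact Finset.mem_coe.1 (hcrit i (Finset.mem_coe.2 hi))
    · obtain ⟨w, hw, hmem⟩ := wit_pair_mem hn havoid htype ha hb hc h2
      rw [heq] at hmem
      have hcrit := ((ind_mem_BB hn hw _ _).1 hmem).1
      intro i hi
      exact Finset.mem_coe.1 (hcrit i (Finset.mem_coe.2 hi))
  have hsnd : p.2 = p'.2 := by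
    apply Finset.Subset.antisymm
    · obtain ⟨w, hw, hmem⟩ := wit_pair_mem2 hn havoid htype ha hb hc h2'
      rw [← heq] at hmem
      have hcrit := ((ind_mem_BB hn hw _ _).1 hmem).2
      intro i hi
      have h3 := hcrit i (Finset.mem_coe.2 hi)
      by_contra hcon
      exact h3 (fun h4 => hcon (Finset.mem_coe.1 h4))
    · obtain ⟨w, hw, hmem⟩ := wit_pair_mem2 hn havoid htype ha hb hc h2
      rw [heq] at hmem
      have hcrit := ((ind_mem_BB hn hw _ _).1 hmem).2
      intro i hi
      have h3 := hcrit i (Finset.mem_coe.2 hi)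
      by_contra hcon
      exact h3 (fun h4 => hcon (Finset.mem_coe.1 h4))
  exact Prod.ext hfst hsnd

include hn havoid htype ha hb hc in
lemma atom_notmem_M (S : Set (Fin n)) {s t : ℕ}
    {p : Finset (Fin n) × Finset (Fin n)} (hp : p ∈ Dfin n s t) :
    atomInt (KK δ) S ≠ BB δ ↑p.1 ↑p.2 := by
  classical
  obtain ⟨h1, h2, -, -, -, -⟩ := mem_Dfin.1 hp
  set zf : Fin n := ⟨0, by omega⟩ with hzf
  intro heq
  rw [atomInt_eq] at heq
  by_cases h0 : zf ∈ S
  · obtain ⟨w, hw, hmem⟩ := wit_pair_mem hn havoid htype ha hb hc h2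
    rw [← heq] at hmem
    have hcrit := ((ind_mem_BB hn hw S Sᶜ).1 hmem).1 zf h0
    have : zf.val ≠ 0 := mem_Cfin.1 (h1 (Finset.mem_coe.1 hcrit))
    exact this rfl
  · obtain ⟨w, hw⟩ := ind_word hn havoid htype ha hb hc ((↑p.1 : Set (Fin n)) ∪ {zf})
    have hmem : w ∈ BB δ ↑p.1 ↑p.2 := by
      apply (ind_mem_BB hn hw _ _).2
      constructor
      · intro i hi
        exact Set.mem_union_left _ hi
      · intro i hi hcon
        rcases (Set.mem_union _ _ _).1 hcon with hl | hr
        · exact (Finset.mem_sdiff.1 (h2 (Finset.mem_coe.1 hi))).2 (Finset.mem_coe.1 hl)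
        · have hiC : i.val ≠ 0 :=
            mem_Cfin.1 (Finset.mem_sdiff.1 (h2 (Finset.mem_coe.1 hi))).1
          rw [Set.mem_singleton_iff] at hr
          exact hiC (by rw [hr])
    rw [← heq] at hmem
    have hcrit := ((ind_mem_BB hn hw S Sᶜ).1 hmem).2 zf h0
    exact hcrit (Set.mem_union_right _ rfl)

include hn havoid htype ha hb hc in
lemma empty_notmem_M {s t : ℕ}
    {p : Finset (Fin n) × Finset (Fin n)} (hp : p ∈ Dfin n s t) :
    (∅ : Set (List (Sig n))) ≠ BB δ ↑p.1 ↑p.2 := by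
  obtain ⟨-, h2, -, -, -, -⟩ := mem_Dfin.1 hp
  obtain ⟨w, -, hmem⟩ := wit_pair_mem hn havoid htype ha hb hc h2
  intro heq
  rw [← heq] at hmem
  exact hmem

include hn havoid htype ha hb hc in
lemma sc_proper (S : Set (Fin n)) (hS1 : S.Nonempty) (hS2 : Sᶜ.Nonempty) :
    stateComplexity (atomInt (KK δ) S) =
      2 + ∑ x ∈ Finset.Icc 1 S.ncard, ∑ y ∈ Finset.Icc 1 (n - S.ncard),
        (n - 1).choose x * ((n - 1 - x).choose y) := by
  classical
  have hMfin : ((fun p : Finset (Fin n) × Finset (Fin n) => BB δ ↑p.1 ↑p.2) ''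
      ↑(Dfin n S.ncard (n - S.ncard))).Finite :=
    ((Dfin n S.ncard (n - S.ncard)).finite_toSet).image _
  have hAne : atomInt (KK δ) S ≠ ∅ :=
    Set.nonempty_iff_ne_empty.1 (atom_nonempty hn havoid htype ha hb hc S)
  have hAnot : atomInt (KK δ) S ∉ insert ∅ ((fun p : Finset (Fin n) × Finset (Fin n) =>
      BB δ ↑p.1 ↑p.2) '' ↑(Dfin n S.ncard (n - S.ncard))) := by
    intro hcon
    rcases Set.mem_insert_iff.1 hcon with h | ⟨p, hp, hpe⟩
    · exact hAne h
    · exact atom_notmem_M hn havoid htype ha hb hc S (Finset.mem_coe.1 hp) hpe.symm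
  have hEnot : (∅ : Set (List (Sig n))) ∉ (fun p : Finset (Fin n) × Finset (Fin n) =>
      BB δ ↑p.1 ↑p.2) '' ↑(Dfin n S.ncard (n - S.ncard)) := by
    rintro ⟨p, hp, hpe⟩
    exact empty_notmem_M hn havoid htype ha hb hc (Finset.mem_coe.1 hp) hpe.symm
  have h1 : stateComplexity (atomInt (KK δ) S) = (quotients (atomInt (KK δ) S)).ncard :=
    Nat.card_coe_set_eq _
  rw [h1, quot_proper hn havoid htype ha hb hc S hS1 hS2,
    Set.ncard_insert_of_notMem hAnot (hMfin.insert ∅),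
    Set.ncard_insert_of_notMem hEnot hMfin,
    Set.ncard_image_of_injOn (BB_injOn_Dfin hn havoid htype ha hb hc _ _),
    Set.ncard_coe_finset, card_Dfin hn]
  omega


include hn havoid htype ha hb hc in
lemma quot_empty :
    quotients (atomInt (KK δ) (∅ : Set (Fin n))) = insert (atomInt (KK δ) ∅)
      ((fun Yf : Finset (Fin n) => BB δ ∅ ↑Yf) '' ↑(Yfin n)) := by
  classical
  have hzf : ((⟨0, by omega⟩ : Fin n) : Fin n) ∈ (Set.univ : Set (Fin n)) := Set.mem_univ _
  apply Set.Subset.antisymm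
  · rintro L ⟨w, rfl⟩
    rw [leftQuot_atomInt, Set.image_empty, Set.compl_empty]
    cases w with
    | nil =>
      rw [TT_nil_image]
      have : BB δ ∅ Set.univ = atomInt (KK δ) (∅ : Set (Fin n)) := by
        rw [atomInt_eq, Set.compl_empty]
      rw [this]
      exact Set.mem_insert _ _
    | cons xh wt =>
      apply Set.mem_insert_of_mem
      have hYfin : (TT δ (xh :: wt) '' Set.univ).Finite := Set.toFinite _
      refine ⟨hYfin.toFinset, ?_, ?_⟩
      · apply Finset.mem_coe.2
        apply mem_Yfin.2
        constructor
        · apply Finset.nonempty_iff_ne_empty.1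
          exact ⟨TT δ (xh :: wt) ⟨0, by omega⟩,
            hYfin.mem_toFinset.2 ⟨⟨0, by omega⟩, Set.mem_univ _, rfl⟩⟩
        · intro r hr
          obtain ⟨i, -, rfl⟩ := hYfin.mem_toFinset.1 hr
          exact mem_Cfin.2 (TT_ne0 havoid wt xh i)
      · simp only [Set.Finite.coe_toFinset]
  · intro L hL
    rcases Set.mem_insert_iff.1 hL with rfl | ⟨Yf, hYf, rfl⟩
    · exact ⟨[], by rw [leftQuot_atomInt, Set.image_empty, Set.compl_empty, TT_nil_image,
        ← Set.compl_empty, ← atomInt_eq]⟩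
    · obtain ⟨hYne, hYsub⟩ := mem_Yfin.1 (Finset.mem_coe.1 hYf)
      obtain ⟨f, hfAv, hfP, hfPc⟩ := surj_exists hn Set.univ ↑Yf ∅
        (fun q hq => mem_Cfin.1 (hYsub (Finset.mem_coe.1 hq)))
        (fun q hq => absurd hq (Set.notMem_empty q))
        (by
          rw [Set.ncard_coe_finset, Set.ncard_univ, Nat.card_eq_fintype_card,
            Fintype.card_fin]
          have := Finset.card_le_card hYsub
          rw [card_Cfin hn] at this
          omega)
        (by rw [Set.ncard_empty]; exact Nat.zero_le _)
        (fun _ => Finset.coe_nonempty.2 (Finset.nonempty_iff_ne_empty.2 hYne))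
        (by rw [Set.compl_univ]; exact fun h => absurd h (by simp))
      obtain ⟨w, hw⟩ := genAll hn havoid htype ha hb hc f hfAv
      refine ⟨w, ?_⟩
      rw [leftQuot_atomInt, Set.image_empty, Set.compl_empty,
        show TT δ w = f from funext hw, hfP]

include hn havoid htype ha hb hc in
lemma notmem_empty_M {Yf : Finset (Fin n)} (hYf : Yf ∈ Yfin n) :
    atomInt (KK δ) (∅ : Set (Fin n)) ≠ BB δ ∅ ↑Yf := by
  classical
  obtain ⟨-, hYsub⟩ := mem_Yfin.1 hYf
  obtain ⟨w, hw⟩ := ind_word hn havoid htype ha hb hc {q : Fin n | q.val = 0}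
  intro heq
  have hmem : w ∈ BB δ ∅ ↑Yf := by
    apply (ind_mem_BB hn hw _ _).2
    refine ⟨fun i hi => absurd hi (Set.notMem_empty i), fun i hi hcon => ?_⟩
    exact mem_Cfin.1 (hYsub (Finset.mem_coe.1 hi)) hcon
  rw [← heq, atomInt_eq, Set.compl_empty] at hmem
  have hcrit := ((ind_mem_BB hn hw ∅ Set.univ).1 hmem).2 ⟨0, by omega⟩ (Set.mem_univ _)
  exact hcrit rfl

include hn havoid htype ha hb hc in
lemma BB_injOn_Yfin :
    Set.InjOn (fun Yf : Finset (Fin n) => BB δ ∅ ↑Yf) ↑(Yfin n) := by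
  intro Y hY Y' hY' heq
  simp only [] at heq
  have key : ∀ Z Z' : Finset (Fin n), BB δ ∅ (↑Z : Set (Fin n)) = BB δ ∅ ↑Z' → Z' ⊆ Z := by
    intro Z Z' h
    obtain ⟨w, hw⟩ := ind_word hn havoid htype ha hb hc ((↑Z : Set (Fin n))ᶜ)
    have hmem : w ∈ BB δ ∅ ↑Z := by
      apply (ind_mem_BB hn hw _ _).2
      exact ⟨fun i hi => absurd hi (Set.notMem_empty i), fun i hi hcon => hcon hi⟩
    rw [h] at hmem
    have hcrit := ((ind_mem_BB hn hw _ _).1 hmem).2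
    intro i hi
    have h3 := hcrit i (Finset.mem_coe.2 hi)
    by_contra hcon
    exact h3 (fun h4 => hcon (Finset.mem_coe.1 h4))
  exact Finset.Subset.antisymm (key Y' Y heq.symm) (key Y Y' heq)

include hn havoid htype ha hb hc in
lemma sc_empty : stateComplexity (atomInt (KK δ) (∅ : Set (Fin n))) = 2 ^ (n - 1) := by
  classical
  have hMfin : ((fun Yf : Finset (Fin n) => BB δ ∅ ↑Yf) '' ↑(Yfin n)).Finite :=
    ((Yfin n).finite_toSet).image _
  have hAnot : atomInt (KK δ) (∅ : Set (Fin n)) ∉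
      (fun Yf : Finset (Fin n) => BB δ ∅ ↑Yf) '' ↑(Yfin n) := by
    rintro ⟨Yf, hYf, hpe⟩
    exact notmem_empty_M hn havoid htype ha hb hc (Finset.mem_coe.1 hYf) hpe.symm
  have h1 : stateComplexity (atomInt (KK δ) (∅ : Set (Fin n))) =
      (quotients (atomInt (KK δ) (∅ : Set (Fin n)))).ncard := Nat.card_coe_set_eq _
  rw [h1, quot_empty hn havoid htype ha hb hc,
    Set.ncard_insert_of_notMem hAnot hMfin,
    Set.ncard_image_of_injOn (BB_injOn_Yfin hn havoid htype ha hb hc),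
    Set.ncard_coe_finset, card_Yfin hn]
  have h2 : 1 ≤ 2 ^ (n - 1) := Nat.one_le_two_pow
  omega

include hn havoid htype ha hb hc in
lemma quot_univ :
    quotients (atomInt (KK δ) (Set.univ : Set (Fin n))) = insert (atomInt (KK δ) Set.univ)
      ((fun Xf : Finset (Fin n) => BB δ ↑Xf ∅) '' ↑(Yfin n)) := by
  classical
  apply Set.Subset.antisymm
  · rintro L ⟨w, rfl⟩
    rw [leftQuot_atomInt, Set.compl_univ, Set.image_empty]
    cases w with
    | nil =>
      rw [TT_nil_image]
      have : BB δ Set.univ ∅ = atomInt (KK δ) (Set.univ : Set (Fin n)) := by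
        rw [atomInt_eq, Set.compl_univ]
      rw [this]
      exact Set.mem_insert _ _
    | cons xh wt =>
      apply Set.mem_insert_of_mem
      have hXfin : (TT δ (xh :: wt) '' Set.univ).Finite := Set.toFinite _
      refine ⟨hXfin.toFinset, ?_, ?_⟩
      · apply Finset.mem_coe.2
        apply mem_Yfin.2
        constructor
        · apply Finset.nonempty_iff_ne_empty.1
          exact ⟨TT δ (xh :: wt) ⟨0, by omega⟩,
            hXfin.mem_toFinset.2 ⟨⟨0, by omega⟩, Set.mem_univ _, rfl⟩⟩
        · intro r hr
          obtain ⟨i, -, rfl⟩ := hXfin.mem_toFinset.1 hr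
          exact mem_Cfin.2 (TT_ne0 havoid wt xh i)
      · simp only [Set.Finite.coe_toFinset]
  · intro L hL
    rcases Set.mem_insert_iff.1 hL with rfl | ⟨Xf, hXf, rfl⟩
    · exact ⟨[], by rw [leftQuot_atomInt, Set.compl_univ, Set.image_empty, TT_nil_image,
        ← Set.compl_univ, ← atomInt_eq]⟩
    · obtain ⟨hXne, hXsub⟩ := mem_Yfin.1 (Finset.mem_coe.1 hXf)
      obtain ⟨f, hfAv, hfP, hfPc⟩ := surj_exists hn Set.univ ↑Xf ∅
        (fun q hq => mem_Cfin.1 (hXsub (Finset.mem_coe.1 hq)))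
        (fun q hq => absurd hq (Set.notMem_empty q))
        (by
          rw [Set.ncard_coe_finset, Set.ncard_univ, Nat.card_eq_fintype_card,
            Fintype.card_fin]
          have := Finset.card_le_card hXsub
          rw [card_Cfin hn] at this
          omega)
        (by rw [Set.ncard_empty]; exact Nat.zero_le _)
        (fun _ => Finset.coe_nonempty.2 (Finset.nonempty_iff_ne_empty.2 hXne))
        (by rw [Set.compl_univ]; exact fun h => absurd h (by simp))
      obtain ⟨w, hw⟩ := genAll hn havoid htype ha hb hc f hfAv
      refine ⟨w, ?_⟩
      rw [leftQuot_atomInt, Set.compl_univ, Set.image_empty,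
        show TT δ w = f from funext hw, hfP]

include hn havoid htype ha hb hc in
lemma notmem_univ_M {Xf : Finset (Fin n)} (hXf : Xf ∈ Yfin n) :
    atomInt (KK δ) (Set.univ : Set (Fin n)) ≠ BB δ ↑Xf ∅ := by
  classical
  obtain ⟨-, hXsub⟩ := mem_Yfin.1 hXf
  obtain ⟨w, hw⟩ := ind_word hn havoid htype ha hb hc {q : Fin n | q.val ≠ 0}
  intro heq
  have hmem : w ∈ BB δ ↑Xf ∅ := by
    apply (ind_mem_BB hn hw _ _).2
    refine ⟨fun i hi => mem_Cfin.1 (hXsub (Finset.mem_coe.1 hi)),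
      fun i hi => absurd hi (Set.notMem_empty i)⟩
  rw [← heq, atomInt_eq, Set.compl_univ] at hmem
  have hcrit := ((ind_mem_BB hn hw Set.univ ∅).1 hmem).1 ⟨0, by omega⟩ (Set.mem_univ _)
  exact hcrit rfl

include hn havoid htype ha hb hc in
lemma BB_injOn_Xfin :
    Set.InjOn (fun Xf : Finset (Fin n) => BB δ ↑Xf ∅) ↑(Yfin n) := by
  intro X hX X' hX' heq
  simp only [] at heq
  have key : ∀ Z Z' : Finset (Fin n), BB δ (↑Z : Set (Fin n)) ∅ = BB δ ↑Z' ∅ → Z' ⊆ Z := by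
    intro Z Z' h
    obtain ⟨w, hw⟩ := ind_word hn havoid htype ha hb hc (↑Z : Set (Fin n))
    have hmem : w ∈ BB δ ↑Z ∅ := by
      apply (ind_mem_BB hn hw _ _).2
      exact ⟨fun i hi => hi, fun i hi => absurd hi (Set.notMem_empty i)⟩
    rw [h] at hmem
    have hcrit := ((ind_mem_BB hn hw _ _).1 hmem).1
    intro i hi
    exact Finset.mem_coe.1 (hcrit i (Finset.mem_coe.2 hi))
  exact Finset.Subset.antisymm (key X' X heq.symm) (key X X' heq)

include hn havoid htype ha hb hc in
lemma sc_univ : stateComplexity (atomInt (KK δ) (Set.univ : Set (Fin n))) = 2 ^ (n - 1) := by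
  classical
  have hMfin : ((fun Xf : Finset (Fin n) => BB δ ↑Xf ∅) '' ↑(Yfin n)).Finite :=
    ((Yfin n).finite_toSet).image _
  have hAnot : atomInt (KK δ) (Set.univ : Set (Fin n)) ∉
      (fun Xf : Finset (Fin n) => BB δ ↑Xf ∅) '' ↑(Yfin n) := by
    rintro ⟨Xf, hXf, hpe⟩
    exact notmem_univ_M hn havoid htype ha hb hc (Finset.mem_coe.1 hXf) hpe.symm
  have h1 : stateComplexity (atomInt (KK δ) (Set.univ : Set (Fin n))) =
      (quotients (atomInt (KK δ) (Set.univ : Set (Fin n)))).ncard :=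
    Nat.card_coe_set_eq _
  rw [h1, quot_univ hn havoid htype ha hb hc,
    Set.ncard_insert_of_notMem hAnot hMfin,
    Set.ncard_image_of_injOn (BB_injOn_Xfin hn havoid htype ha hb hc),
    Set.ncard_coe_finset, card_Yfin hn]
  have h2 : 1 ≤ 2 ^ (n - 1) := Nat.one_le_two_pow
  omega

end Main

end Atom10

/-- For the witness `L_n(Σ_n)` (the alphabet `Σ_n` has one letter for each pair
`i < j` of `Q_n`, inducing a transformation of type `{i,j}` avoiding `0`, with the
letters of the pairs `{0,n-1}`, `{0,1}`, `{1,n-1}`, `{0,2}` inducing `a`, `b`, `c`, `d`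
respectively), every atomic intersection `A_S` is an atom, and its state complexity
meets the bounds with equality:
`κ(A_S) = 2^{n-1}` for `S ∈ {∅, Q_n}`, and
`κ(A_S) = 2 + Σ_{x=1}^{|S|} Σ_{y=1}^{n-|S|} C(n-1,x) C(n-1-x,y)` otherwise. -/
theorem stmt10 (n : ℕ) (hn : 4 ≤ n)
    (δ : {p : Fin n × Fin n // p.1 < p.2} → Fin n → Fin n)
    (havoid : ∀ x q, (δ x q).val ≠ 0)
    (htype : ∀ x, rank (δ x) = n - 1 ∧ δ x x.val.1 = δ x x.val.2)
    (ha : ∀ x : {p : Fin n × Fin n // p.1 < p.2},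
      x.val.1.val = 0 → x.val.2.val = n - 1 →
      ∀ q, (δ x q).val = if q.val = n - 1 then 1 else q.val + 1)
    (hb : ∀ x : {p : Fin n × Fin n // p.1 < p.2},
      x.val.1.val = 0 → x.val.2.val = 1 →
      ∀ q, (δ x q).val =
        if q.val = 0 then 2 else if q.val = 1 then 2 else if q.val = 2 then 1 else q.val)
    (hc : ∀ x : {p : Fin n × Fin n // p.1 < p.2},
      x.val.1.val = 1 → x.val.2.val = n - 1 →
      ∀ q, (δ x q).val = if q.val = n - 1 then 2 else q.val + 1)
    (hd : ∀ x : {p : Fin n × Fin n // p.1 < p.2},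
      x.val.1.val = 0 → x.val.2.val = 2 →
      ∀ q, (δ x q).val = if q.val = 0 then 2 else q.val)
    (S : Set (Fin n)) :
    let D : DFA {p : Fin n × Fin n // p.1 < p.2} (Fin n) :=
      ⟨fun q x => δ x q, ⟨0, by omega⟩, {p : Fin n | p.val = n - 1}⟩
    let K : Fin n → Set (List {p : Fin n × Fin n // p.1 < p.2}) :=
      fun q => {w | D.evalFrom q w ∈ D.accept}
    (atomInt K S).Nonempty ∧
    ((S = ∅ ∨ S = Set.univ) → stateComplexity (atomInt K S) = 2 ^ (n - 1)) ∧
    (S ≠ ∅ ∧ S ≠ Set.univ →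
      stateComplexity (atomInt K S) =
        2 + ∑ x ∈ Finset.Icc 1 S.ncard, ∑ y ∈ Finset.Icc 1 (n - S.ncard),
          (n - 1).choose x * (n - 1 - x).choose y) := by
  
  intro D K
  refine ⟨?_, ?_, ?_⟩
  · exact Atom10.atom_nonempty hn havoid htype ha hb hc S
  · rintro (rfl | rfl)
    · exact Atom10.sc_empty hn havoid htype ha hb hc
    · exact Atom10.sc_univ hn havoid htype ha hb hc
  · rintro ⟨h1, h2⟩
    exact Atom10.sc_proper hn havoid htype ha hb hc S (Set.nonempty_iff_ne_empty.2 h1)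
      (Set.nonempty_compl.2 h2)
end
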